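/- arXiv:2211.02399 — 8 statements merged into one kernel-verified Lean document; each statement's English description precedes it below -/
import Mathlib

section
/- (Reverse Chernoff bound) For positive integers l, z with l ≤ z - 1 and 0 < ν < 1, we have B_{z,l}(ν) ≥ (1/(e√l)) · exp(-z · D(l/z ∥ ν)). -/
open Real Finset

-- (n+1)^n ≤ n^n * e for n ≥ 1
lemma aux_succ_pow (n : ℕ) (hn : 1 ≤ n) : ((n : ℝ) + 1) ^ n ≤ (n : ℝ) ^ n * Real.exp 1 := by
  have hn0 : (0:ℝ) < n := by exact_mod_cast hn
  have h1 : (n : ℝ) + 1 ≤ n * Real.exp (1 / n) := by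
    have h := Real.add_one_le_exp (1 / (n:ℝ))
    calc (n:ℝ) + 1 = n * (1/n + 1) := by field_simp; ring
    _ ≤ n * Real.exp (1/n) := by
        apply mul_le_mul_of_nonneg_left h (le_of_lt hn0)
  calc ((n:ℝ)+1)^n ≤ ((n:ℝ) * Real.exp (1/n))^n := by
        apply pow_le_pow_left₀ (by positivity) h1
  _ = (n:ℝ)^n * Real.exp 1 := by
      rw [mul_pow, ← Real.exp_nat_mul]
      congr 1
      field_simp

-- key: m! * (m+l)^(m+l) ≤ (m+l)! * m^m * e^l
lemma aux_lemA (m : ℕ) (hm : 1 ≤ m) (l : ℕ) :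
    (m.factorial : ℝ) * ((m : ℝ) + l) ^ (m + l) ≤
      ((m + l).factorial : ℝ) * (m : ℝ) ^ m * Real.exp l := by
  induction l with
  | zero => simp
  | succ l ih =>
    have hn : 1 ≤ m + l := le_trans hm (Nat.le_add_right m l)
    have hn0 : (0:ℝ) < (m:ℝ) + l := by positivity
    have key : ((m:ℝ) + l + 1) ^ (m + l) ≤ ((m:ℝ) + l) ^ (m + l) * Real.exp 1 := by
      have := aux_succ_pow (m + l) hn
      push_cast at this
      convert this using 2 <;> push_cast <;> ring
    have fpos : (0:ℝ) < (m.factorial : ℝ) := by positivity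
    have e1 : ((m:ℝ) + (l+1:ℕ)) ^ (m + (l+1)) = ((m:ℝ) + l + 1) ^ (m + l) * ((m:ℝ) + l + 1) := by
      push_cast; rw [← pow_succ]; ring_nf
    calc (m.factorial : ℝ) * ((m : ℝ) + (l+1:ℕ)) ^ (m + (l+1))
        = (m.factorial : ℝ) * ((m:ℝ) + l + 1) ^ (m + l) * ((m:ℝ) + l + 1) := by
          rw [e1, mul_assoc]
      _ ≤ (m.factorial : ℝ) * (((m:ℝ) + l) ^ (m + l) * Real.exp 1) * ((m:ℝ) + l + 1) := by
          apply mul_le_mul_of_nonneg_right _ (by positivity)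
          exact mul_le_mul_of_nonneg_left key (le_of_lt fpos)
      _ = ((m.factorial : ℝ) * ((m:ℝ) + l) ^ (m + l)) * (Real.exp 1 * ((m:ℝ) + l + 1)) := by ring
      _ ≤ (((m + l).factorial : ℝ) * (m : ℝ) ^ m * Real.exp l) * (Real.exp 1 * ((m:ℝ) + l + 1)) := by
          apply mul_le_mul_of_nonneg_right ih (by positivity)
      _ = ((m + (l+1)).factorial : ℝ) * (m : ℝ) ^ m * Real.exp (l+1:ℕ) := by
          have : ((m + (l+1)).factorial : ℝ) = ((m:ℝ) + l + 1) * ((m+l).factorial : ℝ) := by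
            have : m + (l+1) = (m + l) + 1 := by ring
            rw [this, Nat.factorial_succ]
            push_cast; ring
          rw [this]
          rw [show ((l+1:ℕ):ℝ) = (l:ℝ) + 1 by push_cast; ring, Real.exp_add]
          ring

-- Stirling upper bound: l! ≤ e * √l * (l/e)^l for l ≥ 1
lemma aux_lemB (l : ℕ) (hl : 1 ≤ l) :
    (l.factorial : ℝ) ≤ Real.exp 1 * Real.sqrt l * ((l : ℝ) / Real.exp 1) ^ l := by
  have hpos : 0 < Stirling.stirlingSeq l := by
    obtain ⟨k, rfl⟩ := Nat.exists_eq_add_of_le hl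
    simpa [Nat.add_comm] using Stirling.stirlingSeq'_pos k
  have hle : Stirling.stirlingSeq l ≤ Stirling.stirlingSeq 1 := by
    have := Stirling.log_stirlingSeq'_antitone (Nat.zero_le (l - 1))
    simp only [Function.comp] at this
    have h1 : Nat.succ (l-1) = l := Nat.succ_pred_eq_of_pos hl
    rw [h1, Nat.succ_eq_add_one, zero_add] at this
    have h1pos : 0 < Stirling.stirlingSeq 1 := Stirling.stirlingSeq'_pos 0
    exact (Real.log_le_log_iff hpos h1pos).mp this
  rw [Stirling.stirlingSeq_one] at hle
  have hl0 : (0:ℝ) < l := by exact_mod_cast hl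
  have hden : (0:ℝ) < Real.sqrt (2 * l) * ((l:ℝ) / Real.exp 1) ^ l := by positivity
  have := (div_le_iff₀ hden).mp (le_of_eq_of_le rfl hle : Stirling.stirlingSeq l ≤ _)
  unfold Stirling.stirlingSeq at this
  calc (l.factorial : ℝ) ≤ Real.exp 1 / Real.sqrt 2 * (Real.sqrt (2*l) * ((l:ℝ)/Real.exp 1)^l) := this
    _ = Real.exp 1 * Real.sqrt l * ((l : ℝ) / Real.exp 1) ^ l := by
        rw [show (2:ℝ) * l = 2 * l by ring, Real.sqrt_mul (by norm_num : (0:ℝ) ≤ 2)]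
        rw [div_mul_eq_mul_div]
        field_simp

/-- Binomial CDF: `B z l p = ∑_{j=0}^{l} C(z,j) p^j (1-p)^{z-j}`. -/
noncomputable def binCDF (z l : ℕ) (p : ℝ) : ℝ :=
  ∑ j ∈ Finset.range (l + 1), (z.choose j : ℝ) * p ^ j * (1 - p) ^ (z - j)

/-- Binary relative entropy `D(p‖q)`. -/
noncomputable def relEnt (p q : ℝ) : ℝ :=
  p * Real.log (p / q) + (1 - p) * Real.log ((1 - p) / (1 - q))

theorem stmt_2 (z l : ℕ) (ν : ℝ) (hl : 1 ≤ l) (hlz : l ≤ z - 1) (hz : 1 ≤ z)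
    (hν0 : 0 < ν) (hν1 : ν < 1) :
    (1 / (Real.exp 1 * Real.sqrt l)) *
        Real.exp (-(z : ℝ) * relEnt ((l : ℝ) / (z : ℝ)) ν)
      ≤ binCDF z l ν := by
  set m := z - l with hm_def
  have hzm : l + m = z := by omega
  have hm : 1 ≤ m := by omega
  have hz0 : (0:ℝ) < z := by exact_mod_cast (by omega : 0 < z)
  have hl0 : (0:ℝ) < l := by exact_mod_cast hl
  have hm0 : (0:ℝ) < m := by exact_mod_cast hm
  have hzr : (z:ℝ) = (l:ℝ) + m := by exact_mod_cast congrArg (Nat.cast (R := ℝ)) hzm.symm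
  have hp0 : (0:ℝ) < (l:ℝ)/z := by positivity
  have hq0 : (0:ℝ) < (m:ℝ)/z := by positivity
  have h1p : 1 - (l:ℝ)/z = (m:ℝ)/z := by
    field_simp
    linarith [hzr]
  have h1ν : (0:ℝ) < 1 - ν := by linarith
  -- exponent computation
  have e1 : -(z:ℝ) * relEnt ((l:ℝ)/z) ν
      = (l:ℝ) * Real.log (ν / ((l:ℝ)/z)) + (m:ℝ) * Real.log ((1-ν)/((m:ℝ)/z)) := by
    rw [relEnt, h1p]
    rw [show Real.log (ν / ((l:ℝ)/z)) = - Real.log (((l:ℝ)/z) / ν) by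
      rw [← Real.log_inv, inv_div]]
    rw [show Real.log ((1-ν) / ((m:ℝ)/z)) = - Real.log (((m:ℝ)/z) / (1-ν)) by
      rw [← Real.log_inv, inv_div]]
    field_simp
    ring
  have hexp : Real.exp (-(z:ℝ) * relEnt ((l:ℝ)/z) ν)
      = (ν / ((l:ℝ)/z))^l * ((1-ν)/((m:ℝ)/z))^m := by
    rw [e1, Real.exp_add, Real.exp_nat_mul, Real.exp_nat_mul,
      Real.exp_log (by positivity), Real.exp_log (by positivity)]
  -- single term bound
  have hterm : (z.choose l : ℝ) * ν^l * (1-ν)^m ≤ binCDF z l ν := by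
    rw [binCDF]
    have := Finset.single_le_sum
      (f := fun j => (z.choose j : ℝ) * ν ^ j * (1 - ν) ^ (z - j))
      (fun i _ => by positivity) (Finset.self_mem_range_succ l)
    simpa [hm_def] using this
  -- key combinatorial inequality
  have hchoose : (z.choose l : ℝ) * (l.factorial:ℝ) * (m.factorial:ℝ) = (z.factorial:ℝ) := by
    exact_mod_cast congrArg (Nat.cast (R := ℝ))
      (Nat.choose_mul_factorial_mul_factorial (show l ≤ z by omega))
  have hA' : (m.factorial:ℝ) * (z:ℝ)^z ≤ (z.factorial:ℝ) * (m:ℝ)^m * Real.exp l := by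
    have := aux_lemA m hm l
    rw [show (m:ℝ) + l = (z:ℝ) by rw [hzr]; ring, show m + l = z by omega] at this
    exact this
  have hB := aux_lemB l hl
  have hexpl : Real.exp (l:ℝ) = Real.exp 1 ^ l := by
    rw [← Real.exp_nat_mul, mul_one]
  have key : 1 / (Real.exp 1 * Real.sqrt l)
      ≤ (z.choose l : ℝ) * ((l:ℝ)/z)^l * ((m:ℝ)/z)^m := by
    have hEl : (0:ℝ) < Real.exp 1 ^ l := by positivity
    have hsql : (0:ℝ) < Real.sqrt l := Real.sqrt_pos.mpr hl0
    rw [div_le_iff₀ (by positivity)]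
    have hfrac : ((l:ℝ)/z)^l * ((m:ℝ)/z)^m = (l:ℝ)^l * (m:ℝ)^m / (z:ℝ)^z := by
      rw [div_pow, div_pow, div_mul_div_comm, ← pow_add, show l + m = z from hzm]
    have hfl : (0:ℝ) < (l.factorial:ℝ) := by positivity
    have hfm : (0:ℝ) < (m.factorial:ℝ) := by positivity
    have hstep : (l.factorial:ℝ) * ((m.factorial:ℝ) * (z:ℝ)^z)
        ≤ (Real.exp 1 * Real.sqrt l * ((l:ℝ)/Real.exp 1)^l)
          * ((z.factorial:ℝ) * (m:ℝ)^m * Real.exp l) :=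
      mul_le_mul hB hA' (by positivity) (by positivity)
    have hre : (Real.exp 1 * Real.sqrt l * ((l:ℝ)/Real.exp 1)^l)
          * ((z.factorial:ℝ) * (m:ℝ)^m * Real.exp l)
        = (Real.exp 1 * Real.sqrt l * (l:ℝ)^l * (m:ℝ)^m * (z.choose l:ℝ))
          * ((l.factorial:ℝ) * (m.factorial:ℝ)) := by
      rw [← hchoose, div_pow, hexpl]
      field_simp
    have hz_pow_le : (z:ℝ)^z
        ≤ Real.exp 1 * Real.sqrt l * (l:ℝ)^l * (m:ℝ)^m * (z.choose l:ℝ) := by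
      have h' : (z:ℝ)^z * ((l.factorial:ℝ) * (m.factorial:ℝ))
          ≤ (Real.exp 1 * Real.sqrt l * (l:ℝ)^l * (m:ℝ)^m * (z.choose l:ℝ))
            * ((l.factorial:ℝ) * (m.factorial:ℝ)) := by
        rw [← hre]
        calc (z:ℝ)^z * ((l.factorial:ℝ) * (m.factorial:ℝ))
            = (l.factorial:ℝ) * ((m.factorial:ℝ) * (z:ℝ)^z) := by ring
          _ ≤ _ := hstep
      exact le_of_mul_le_mul_right h' (by positivity)
    have heq : (z.choose l:ℝ) * ((l:ℝ)/z)^l * (((m:ℝ)/z)^m * (Real.exp 1 * Real.sqrt l))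
        = (Real.exp 1 * Real.sqrt l * (l:ℝ)^l * (m:ℝ)^m * (z.choose l:ℝ)) / (z:ℝ)^z := by
      rw [div_pow, div_pow, ← hzm, pow_add]
      field_simp
    rw [mul_assoc, heq, le_div_iff₀ (by positivity), one_mul]
    exact hz_pow_le
  -- final assembly
  rw [hexp]
  have hpq : (0:ℝ) < (ν/((l:ℝ)/z))^l * ((1-ν)/((m:ℝ)/z))^m := by positivity
  calc (1 / (Real.exp 1 * Real.sqrt l)) * ((ν/((l:ℝ)/z))^l * ((1-ν)/((m:ℝ)/z))^m)
      ≤ ((z.choose l:ℝ) * ((l:ℝ)/z)^l * ((m:ℝ)/z)^m)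
        * ((ν/((l:ℝ)/z))^l * ((1-ν)/((m:ℝ)/z))^m) :=
        mul_le_mul_of_nonneg_right key (le_of_lt hpq)
    _ = (z.choose l:ℝ) * ν^l * (1-ν)^m := by
        rw [div_pow, div_pow, div_pow, div_pow]
        field_simp
        rw [div_pow, mul_pow, mul_div_assoc', div_eq_iff (by positivity)]
        ring
    _ ≤ binCDF z l ν := hterm
end

section
/- For 0 < λ < 1 and integers 0 ≤ l ≤ z, setting ν = 1-λ, the ratio B_{z,l}(ν)/B_{z+1,l}(ν) is nondecreasing in z and satisfies (z-l+1)/((z+1)λ) ≤ B_{z,l}(ν)/B_{z+1,l}(ν) ≤ 1/λ. -/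
open Finset

noncomputable def bt (z j : ℕ) (p : ℝ) : ℝ :=
  (z.choose j : ℝ) * p ^ j * (1 - p) ^ (z - j)

lemma binCDF_def (z l : ℕ) (p : ℝ) : binCDF z l p = ∑ j ∈ range (l+1), bt z j p := rfl

lemma binCDF_succ_l (z l : ℕ) (p : ℝ) :
    binCDF z (l+1) p = binCDF z l p + bt z (l+1) p := by
  rw [binCDF_def, binCDF_def, Finset.sum_range_succ]

lemma bt_nonneg {p : ℝ} (hp0 : 0 < p) (hp1 : p < 1) (z j : ℕ) : 0 ≤ bt z j p := by
  unfold bt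
  have h1 : (0:ℝ) < 1 - p := by linarith
  positivity

lemma bt_pos {p : ℝ} (hp0 : 0 < p) (hp1 : p < 1) {z j : ℕ} (h : j ≤ z) : 0 < bt z j p := by
  unfold bt
  have h1 : (0:ℝ) < 1 - p := by linarith
  have h2 : (0:ℝ) < (z.choose j : ℝ) := by exact_mod_cast Nat.choose_pos h
  positivity

lemma binCDF_pos {p : ℝ} (hp0 : 0 < p) (hp1 : p < 1) {z l : ℕ} (h : l ≤ z) :
    0 < binCDF z l p := by
  rw [binCDF_def]
  apply Finset.sum_pos
  · intro j hj
    exact bt_pos hp0 hp1 (le_trans (Nat.lt_succ_iff.mp (mem_range.mp hj)) h)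
  · exact ⟨0, mem_range.mpr (Nat.succ_pos l)⟩

lemma bt_le_binCDF {p : ℝ} (hp0 : 0 < p) (hp1 : p < 1) (z l : ℕ) :
    bt z l p ≤ binCDF z l p := by
  rw [binCDF_def]
  exact Finset.single_le_sum (fun j _ => bt_nonneg hp0 hp1 z j)
    (mem_range.mpr (Nat.lt_succ_self l))

/-- Key recurrence: `B_{z+1,l} = B_{z,l} - p · a_l(z)`. -/
lemma binCDF_succ (p : ℝ) : ∀ l z : ℕ, l ≤ z →
    binCDF (z+1) l p = binCDF z l p - p * bt z l p := by
  intro l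
  induction l with
  | zero =>
    intro z _
    rw [binCDF_def, binCDF_def, Finset.sum_range_one, Finset.sum_range_one]
    simp only [bt, Nat.choose_zero_right, Nat.cast_one, pow_zero, Nat.sub_zero, one_mul]
    rw [pow_succ]
    ring
  | succ l ih =>
    intro z hz
    have hl : l ≤ z := Nat.le_of_succ_le hz
    rw [binCDF_succ_l, binCDF_succ_l, ih z hl]
    have key : bt (z+1) (l+1) p = p * bt z l p + (1-p) * bt z (l+1) p := by
      unfold bt
      have h1 : z - l = (z - (l+1)) + 1 := by omega
      rw [Nat.succ_sub_succ, Nat.choose_succ_succ, h1]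
      push_cast
      ring
    rw [key]
    ring

lemma choose_cross {j l z₁ z₂ : ℕ} (hj : j ≤ l) (h1 : l ≤ z₁) (h2 : z₁ ≤ z₂) :
    z₁.choose l * z₂.choose j ≤ z₂.choose l * z₁.choose j := by
  have e1 := Nat.choose_mul (n := z₁) hj
  have e2 := Nat.choose_mul (n := z₂) hj
  have key : (z₁-j).choose (l-j) ≤ (z₂-j).choose (l-j) :=
    Nat.choose_le_choose _ (Nat.sub_le_sub_right h2 j)
  have hlj : 0 < l.choose j := Nat.choose_pos hj
  have hmul : z₁.choose l * z₂.choose j * l.choose j ≤ z₂.choose l * z₁.choose j * l.choose j := by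
    calc z₁.choose l * z₂.choose j * l.choose j
        = (z₁.choose l * l.choose j) * z₂.choose j := by ring
      _ = (z₁.choose j * (z₁-j).choose (l-j)) * z₂.choose j := by rw [e1]
      _ ≤ (z₁.choose j * (z₂-j).choose (l-j)) * z₂.choose j := by
          exact Nat.mul_le_mul_right _ (Nat.mul_le_mul_left _ key)
      _ = (z₂.choose l * l.choose j) * z₁.choose j := by rw [e2]; ring
      _ = z₂.choose l * z₁.choose j * l.choose j := by ring
  exact Nat.le_of_mul_le_mul_right hmul hlj

lemma cross {p : ℝ} (hp0 : 0 < p) (hp1 : p < 1) {l z₁ z₂ : ℕ}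
    (h1 : l ≤ z₁) (h2 : z₁ ≤ z₂) :
    bt z₁ l p * binCDF z₂ l p ≤ bt z₂ l p * binCDF z₁ l p := by
  rw [binCDF_def, binCDF_def, Finset.mul_sum, Finset.mul_sum]
  apply Finset.sum_le_sum
  intro j hj
  have hjl : j ≤ l := Nat.lt_succ_iff.mp (mem_range.mp hj)
  have hq : (0:ℝ) ≤ 1 - p := by linarith
  have eexp : (z₁ - l) + (z₂ - j) = (z₂ - l) + (z₁ - j) := by omega
  have lhs : bt z₁ l p * bt z₂ j p
      = ((z₁.choose l * z₂.choose j : ℕ) : ℝ) * (p^(l+j) * (1-p)^((z₁-l)+(z₂-j))) := by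
    unfold bt; rw [pow_add, pow_add]; push_cast; ring
  have rhs : bt z₂ l p * bt z₁ j p
      = ((z₂.choose l * z₁.choose j : ℕ) : ℝ) * (p^(l+j) * (1-p)^((z₂-l)+(z₁-j))) := by
    unfold bt; rw [pow_add, pow_add]; push_cast; ring
  rw [lhs, rhs, eexp]
  apply mul_le_mul_of_nonneg_right
  · exact_mod_cast choose_cross hjl h1 h2
  · positivity

/-- step identity: `p (z-j) a_j = (1-p)(j+1) a_{j+1}` -/
lemma step_id {p : ℝ} {z j : ℕ} (hjz : j < z) :
    p * ((z:ℝ) - j) * bt z j p = (1-p) * ((j:ℝ)+1) * bt z (j+1) p := by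
  have hid := Nat.choose_succ_right_eq z j
  have hc : ((z.choose (j+1) * (j+1) : ℕ) : ℝ) = ((z.choose j * (z - j) : ℕ) : ℝ) := by
    exact_mod_cast congrArg (Nat.cast (R := ℝ)) hid
  have hsub : ((z - j : ℕ) : ℝ) = (z:ℝ) - j := by
    rw [Nat.cast_sub hjz.le]
  have hpow : z - j = (z - (j+1)) + 1 := by omega
  unfold bt
  rw [hpow]
  push_cast [hsub] at hc ⊢
  linear_combination (-(p^(j+1) * (1-p)^(z-(j+1)+1))) * hc

lemma lower_core {p : ℝ} (hp0 : 0 < p) (hp1 : p < 1) {l z : ℕ} (hl : l ≤ z) :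
    p * ((z:ℝ) - l + 1) * (∑ j ∈ range l, bt z j p) ≤ (1-p) * l * binCDF z l p := by
  have hq : (0:ℝ) ≤ 1 - p := by linarith
  rw [Finset.mul_sum]
  calc ∑ j ∈ range l, p * ((z:ℝ) - l + 1) * bt z j p
      ≤ ∑ j ∈ range l, p * ((z:ℝ) - j) * bt z j p := by
        apply Finset.sum_le_sum
        intro j hj
        have hjl : j < l := mem_range.mp hj
        have hle : ((z:ℝ) - l + 1) ≤ (z:ℝ) - j := by
          have : (j:ℝ) + 1 ≤ (l:ℝ) := by exact_mod_cast hjl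
          linarith
        apply mul_le_mul_of_nonneg_right _ (bt_nonneg hp0 hp1 z j)
        exact mul_le_mul_of_nonneg_left hle hp0.le
    _ = ∑ j ∈ range l, (1-p) * ((j:ℝ)+1) * bt z (j+1) p := by
        refine Finset.sum_congr rfl fun j hj => ?_
        exact step_id (lt_of_lt_of_le (mem_range.mp hj) hl)
    _ ≤ ∑ j ∈ range l, (1-p) * (l:ℝ) * bt z (j+1) p := by
        apply Finset.sum_le_sum
        intro j hj
        have hjl : j < l := mem_range.mp hj
        have hle : ((j:ℝ) + 1) ≤ (l:ℝ) := by exact_mod_cast hjl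
        apply mul_le_mul_of_nonneg_right _ (bt_nonneg hp0 hp1 z (j+1))
        exact mul_le_mul_of_nonneg_left hle hq
    _ = (1-p) * (l:ℝ) * ∑ j ∈ range l, bt z (j+1) p := by rw [Finset.mul_sum]
    _ ≤ (1-p) * (l:ℝ) * binCDF z l p := by
        apply mul_le_mul_of_nonneg_left _ (by positivity)
        have hs : ∑ j ∈ range (l+1), bt z j p
            = (∑ j ∈ range l, bt z (j+1) p) + bt z 0 p := Finset.sum_range_succ' _ l
        have h0 : 0 ≤ bt z 0 p := bt_nonneg hp0 hp1 z 0
        rw [binCDF_def, hs]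
        linarith

theorem stmt_5 (lam : ℝ) (hlam0 : 0 < lam) (hlam1 : lam < 1) (l : ℕ) :
    (∀ z₁ z₂ : ℕ, l ≤ z₁ → z₁ ≤ z₂ →
      binCDF z₁ l (1 - lam) / binCDF (z₁ + 1) l (1 - lam)
        ≤ binCDF z₂ l (1 - lam) / binCDF (z₂ + 1) l (1 - lam)) ∧
    (∀ z : ℕ, l ≤ z →
      ((z : ℝ) - l + 1) / (((z : ℝ) + 1) * lam)
          ≤ binCDF z l (1 - lam) / binCDF (z + 1) l (1 - lam) ∧
        binCDF z l (1 - lam) / binCDF (z + 1) l (1 - lam) ≤ 1 / lam) := by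
  set p : ℝ := 1 - lam with hp
  have hp0 : 0 < p := by simp [hp]; linarith
  have hp1 : p < 1 := by simp [hp]; linarith
  have hlp : 1 - p = lam := by rw [hp]; ring
  constructor
  · intro z₁ z₂ h1 h2
    have hB1 : 0 < binCDF z₁ l p := binCDF_pos hp0 hp1 h1
    have hB2 : 0 < binCDF z₂ l p := binCDF_pos hp0 hp1 (h1.trans h2)
    have hB1' : 0 < binCDF (z₁+1) l p := binCDF_pos hp0 hp1 (h1.trans (Nat.le_succ_of_le le_rfl))
    have hB2' : 0 < binCDF (z₂+1) l p :=
      binCDF_pos hp0 hp1 ((h1.trans h2).trans (Nat.le_succ z₂))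
    rw [div_le_div_iff₀ hB1' hB2']
    rw [binCDF_succ p l z₁ h1, binCDF_succ p l z₂ (h1.trans h2)]
    have hc := cross hp0 hp1 h1 h2
    nlinarith [hc, mul_le_mul_of_nonneg_left hc hp0.le]
  · intro z hz
    have hB : 0 < binCDF z l p := binCDF_pos hp0 hp1 hz
    have hB' : 0 < binCDF (z+1) l p := binCDF_pos hp0 hp1 (hz.trans (Nat.le_succ z))
    have hrec := binCDF_succ p l z hz
    have ha : 0 ≤ bt z l p := bt_nonneg hp0 hp1 z l
    have haB : bt z l p ≤ binCDF z l p := bt_le_binCDF hp0 hp1 z l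
    have hzl : (l:ℝ) ≤ (z:ℝ) := by exact_mod_cast hz
    constructor
    · have hS : binCDF z l p = (∑ j ∈ range l, bt z j p) + bt z l p := by
        rw [binCDF_def, Finset.sum_range_succ]
      have hF := lower_core hp0 hp1 hz
      rw [hlp] at hF
      rw [div_le_div_iff₀ (by positivity) hB', hrec]
      have hiden : binCDF z l p * (((z:ℝ)+1)*lam)
            - ((z:ℝ) - l + 1) * (binCDF z l p - p * bt z l p)
          = lam * (l:ℝ) * binCDF z l p
            - p * ((z:ℝ) - l + 1) * (∑ j ∈ range l, bt z j p) := by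
        rw [hS, ← hlp]; ring
      linarith [hF, hiden]
    · rw [div_le_div_iff₀ hB' hlam0, hrec]
      nlinarith [mul_le_mul_of_nonneg_left haB hp0.le]
end

section
/- For 0 < λ < 1, ν = 1-λ, and integers 0 ≤ l ≤ ν z, we have B_{z,l}(ν)/B_{z+1,l}(ν) ≤ (z-l+1+√(λl))/((z+1)λ). -/
open Finset

private lemma lemA (p : ℝ) (n : ℕ) :
    ∀ l, l < n →
      ∑ j ∈ Finset.range (l + 1),
          ((n : ℝ) * p - j) * ((n.choose j : ℝ) * p ^ j * (1 - p) ^ (n - j))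
        = (1 - p) * ((l : ℝ) + 1) *
            ((n.choose (l + 1) : ℝ) * p ^ (l + 1) * (1 - p) ^ (n - (l + 1))) := by
  intro l
  induction l with
  | zero =>
    intro hn
    rw [Finset.sum_range_one]
    have h2 : n.choose 1 = n := Nat.choose_one_right n
    have h4 : (1 - p) ^ (n - 0) = (1 - p) * (1 - p) ^ (n - 1) := by
      rw [← pow_succ']
      congr 1
      omega
    rw [h2, h4, Nat.choose_zero_right]
    push_cast
    ring
  | succ l ih =>
    intro hn
    have hl : l < n := by omega
    rw [Finset.sum_range_succ, ih hl]
    have hc : ((n.choose (l + 1 + 1) : ℝ)) * ((l : ℝ) + 2) =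
        (n.choose (l + 1) : ℝ) * ((n : ℝ) - ((l : ℝ) + 1)) := by
      have h := Nat.choose_succ_right_eq n (l + 1)
      have hcast := congrArg (Nat.cast (R := ℝ)) h
      push_cast [Nat.cast_sub (by omega : l + 1 ≤ n)] at hcast
      linarith [hcast]
    have hpow : (1 - p) ^ (n - (l + 1)) = (1 - p) * (1 - p) ^ (n - (l + 2)) := by
      rw [← pow_succ']
      congr 1
      omega
    have hpow2 : p ^ (l + 2) = p * p ^ (l + 1) := by rw [← pow_succ']
    rw [hpow, hpow2]
    push_cast
    linear_combination (-(p ^ (l + 1) * (1 - p) ^ (n - (l + 2)) * (1 - p) * p)) * hc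

private lemma lemB (p : ℝ) (n : ℕ) :
    ∀ l, l < n →
      ∑ j ∈ Finset.range (l + 1),
          (((l : ℝ) - j) ^ 2 + ((n : ℝ) * p - l + (1 - p)) * ((l : ℝ) - j) - (1 - p) * l)
            * ((n.choose j : ℝ) * p ^ j * (1 - p) ^ (n - j)) = 0 := by
  intro l
  induction l with
  | zero =>
    intro _
    rw [Finset.sum_range_one]
    norm_num
  | succ l ih =>
    intro hn
    have hl : l < n := by omega
    rw [Finset.sum_range_succ]
    have hsplit : ∑ j ∈ Finset.range (l + 1),
        ((((l + 1 : ℕ) : ℝ) - j) ^ 2 + ((n : ℝ) * p - ((l + 1 : ℕ) : ℝ) + (1 - p))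
            * (((l + 1 : ℕ) : ℝ) - j) - (1 - p) * ((l + 1 : ℕ) : ℝ))
          * ((n.choose j : ℝ) * p ^ j * (1 - p) ^ (n - j))
        = ∑ j ∈ Finset.range (l + 1),
            ((((l : ℝ) - j) ^ 2 + ((n : ℝ) * p - l + (1 - p)) * ((l : ℝ) - j) - (1 - p) * l)
              * ((n.choose j : ℝ) * p ^ j * (1 - p) ^ (n - j))
            + ((n : ℝ) * p - j) * ((n.choose j : ℝ) * p ^ j * (1 - p) ^ (n - j))) := by
      apply Finset.sum_congr rfl
      intro j _
      push_cast
      ring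
    rw [hsplit, Finset.sum_add_distrib, ih hl, lemA p n l hl, zero_add]
    push_cast
    ring

theorem stmt_6 (lam : ℝ) (hlam0 : 0 < lam) (hlam1 : lam < 1) (z l : ℕ)
    (hl : (l : ℝ) ≤ (1 - lam) * z) :
    binCDF z l (1 - lam) / binCDF (z + 1) l (1 - lam)
      ≤ ((z : ℝ) - l + 1 + Real.sqrt (lam * l)) / (((z : ℝ) + 1) * lam) := by
  have hq : (1 : ℝ) - (1 - lam) = lam := by ring
  have hlz : l ≤ z := by
    have h1 : (l : ℝ) ≤ (z : ℝ) := by nlinarith [Nat.cast_nonneg (α := ℝ) z]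
    exact_mod_cast h1
  have hln : l < z + 1 := by omega
  set n := z + 1 with hn
  set w : ℕ → ℝ := fun j => (n.choose j : ℝ) * (1 - lam) ^ j * lam ^ (n - j) with hw
  have hwnn : ∀ j, 0 ≤ w j := by
    intro j
    have : (0:ℝ) ≤ 1 - lam := by linarith
    positivity
  set S := ∑ j ∈ Finset.range (l + 1), w j with hS
  set T := ∑ j ∈ Finset.range (l + 1), ((l : ℝ) - j) * w j with hT
  set Q := ∑ j ∈ Finset.range (l + 1), ((l : ℝ) - j) ^ 2 * w j with hQ
  have hSbin : binCDF n l (1 - lam) = S := by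
    simp only [binCDF, hS, hw, hq]
  have hSpos : 0 < S := by
    apply Finset.sum_pos'
    · intro j _; exact hwnn j
    · refine ⟨0, Finset.mem_range.mpr (by omega), ?_⟩
      simp only [hw, Nat.choose_zero_right, pow_zero, Nat.cast_one, one_mul, mul_one,
        Nat.sub_zero]
      positivity
  have hT0 : 0 ≤ T := by
    apply Finset.sum_nonneg
    intro j hj
    have hjl : j ≤ l := by
      have := Finset.mem_range.mp hj; omega
    have : (j : ℝ) ≤ (l : ℝ) := by exact_mod_cast hjl
    exact mul_nonneg (by linarith) (hwnn j)
  -- Cauchy–Schwarz : T^2 ≤ Q * S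
  have hCS : T ^ 2 ≤ Q * S := by
    apply Finset.sum_sq_le_sum_mul_sum_of_sq_eq_mul
    · intro j _; exact mul_nonneg (sq_nonneg _) (hwnn j)
    · intro j _; exact hwnn j
    · intro j _; ring
  -- identity : Q + c * T = lam * l * S
  have hB := lemB (1 - lam) n l hln
  simp only [hq] at hB
  set c : ℝ := (n : ℝ) * (1 - lam) - l + lam with hc
  have hid : Q + c * T - lam * l * S = 0 := by
    rw [hQ, hT, hS, Finset.mul_sum, Finset.mul_sum, ← Finset.sum_add_distrib,
      ← Finset.sum_sub_distrib]
    rw [← hB]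
    apply Finset.sum_congr rfl
    intro j _
    ring
  have hcpos : 0 ≤ c := by
    have : ((n : ℝ)) = (z : ℝ) + 1 := by push_cast [hn]; ring
    rw [hc, this]
    nlinarith
  have hQle : Q ≤ lam * l * S := by nlinarith [mul_nonneg hcpos hT0]
  have hT2 : T ^ 2 ≤ lam * l * S ^ 2 := by nlinarith
  have hTle : T ≤ Real.sqrt (lam * l) * S := by
    have h1 : T = Real.sqrt (T ^ 2) := (Real.sqrt_sq hT0).symm
    have h2 : Real.sqrt (T ^ 2) ≤ Real.sqrt (lam * l * S ^ 2) := Real.sqrt_le_sqrt hT2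
    have h3 : Real.sqrt (lam * l * S ^ 2) = Real.sqrt (lam * l) * S := by
      rw [Real.sqrt_mul (by positivity), Real.sqrt_sq hSpos.le]
    linarith [h1 ▸ h2, h3 ▸ h2]
  -- bridge : lhs numerator
  have hBz : binCDF z l (1 - lam) * (((z : ℝ) + 1) * lam)
      = ∑ j ∈ Finset.range (l + 1), ((n : ℝ) - j) * w j := by
    simp only [binCDF, hq, Finset.sum_mul]
    apply Finset.sum_congr rfl
    intro j hj
    have hjz : j ≤ z := by
      have := Finset.mem_range.mp hj; omega
    have hnat : (z + 1) * z.choose j = (z + 1).choose j * (z + 1 - j) := by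
      have h1 := Nat.add_one_mul_choose_eq z j
      have h2 := Nat.choose_succ_right_eq (z + 1) j
      rw [h1, h2]
    have hcast := congrArg (Nat.cast (R := ℝ)) hnat
    push_cast [Nat.cast_sub (by omega : j ≤ z + 1)] at hcast
    have hpow : lam ^ (n - j) = lam ^ (z - j) * lam := by
      rw [← pow_succ]
      congr 1
      omega
    have hnR : ((n : ℕ) : ℝ) = (z : ℝ) + 1 := by rw [hn]; push_cast; ring
    rw [hw]
    simp only []
    rw [hpow, hnR]
    linear_combination ((1 - lam) ^ j * lam ^ (z - j) * lam) * hcast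
  have hden : (0 : ℝ) < ((z : ℝ) + 1) * lam := by positivity
  rw [hSbin, div_le_div_iff₀ hSpos hden, hBz]
  have hsum : ∑ j ∈ Finset.range (l + 1), ((n : ℝ) - j) * w j
      = ((z : ℝ) - l + 1) * S + T := by
    rw [hS, hT, Finset.mul_sum, ← Finset.sum_add_distrib]
    apply Finset.sum_congr rfl
    intro j _
    have : ((n : ℝ)) = (z : ℝ) + 1 := by push_cast [hn]; ring
    rw [this]
    ring
  rw [hsum]
  nlinarith [hTle, hSpos]
end

section
/- For integers z ≥ 0 and 0 ≤ p ≤ 1, the binomial CDF at the rounded-up mean satisfies B_{z,⌈zp⌉}(p) ≥ 1/2. -/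
open intervalIntegral Finset

-- total sum is 1
lemma sum_term_eq_one (n : ℕ) (p : ℝ) :
    ∑ j ∈ Finset.range (n + 1), (n.choose j : ℝ) * p ^ j * (1 - p) ^ (n - j) = 1 := by
  have h := add_pow p (1 - p) n
  simp only [add_sub_cancel, one_pow] at h
  calc ∑ j ∈ Finset.range (n + 1), (n.choose j : ℝ) * p ^ j * (1 - p) ^ (n - j)
      = ∑ m ∈ Finset.range (n + 1), p ^ m * (1 - p) ^ (n - m) * (n.choose m : ℝ) :=
        Finset.sum_congr rfl (fun j _ => by ring)
    _ = 1 := h.symm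

lemma binCDF_of_ge (n c : ℕ) (p : ℝ) (h : n ≤ c) : binCDF n c p = 1 := by
  unfold binCDF
  have h2 : ∑ j ∈ Finset.range (c + 1), (n.choose j : ℝ) * p ^ j * (1 - p) ^ (n - j)
      = ∑ j ∈ Finset.range (n + 1), (n.choose j : ℝ) * p ^ j * (1 - p) ^ (n - j) := by
    symm
    apply Finset.sum_subset
    · exact Finset.range_subset_range.2 (by omega)
    · intro j hj hj2
      simp only [Finset.mem_range] at hj hj2
      rw [Nat.choose_eq_zero_of_lt (by omega)]
      ring
  rw [h2, sum_term_eq_one]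

-- integration by parts step
lemma ibp (c d : ℕ) (p : ℝ) :
    (d + 1 : ℝ) * ∫ t in p..1, t ^ (c+1) * (1 - t) ^ d =
      (c + 1 : ℝ) * (∫ t in p..1, t ^ c * (1 - t) ^ (d+1)) + p ^ (c+1) * (1 - p) ^ (d+1) := by
  have key : ∀ t : ℝ, HasDerivAt (fun t : ℝ => -(t ^ (c+1) * (1 - t) ^ (d+1)))
      ((d + 1 : ℝ) * (t ^ (c+1) * (1 - t) ^ d) - (c + 1 : ℝ) * (t ^ c * (1 - t) ^ (d+1))) t := by
    intro t
    have h1 : HasDerivAt (fun t : ℝ => (1:ℝ) - t) (-1) t := by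
      simpa using (hasDerivAt_id t).const_sub (1:ℝ)
    have h2 := ((hasDerivAt_pow (c+1) t).mul (h1.pow (d+1))).neg
    refine h2.congr_deriv ?_
    simp only [Pi.pow_apply]
    push_cast
    ring
  have hc1 : Continuous fun t : ℝ => t ^ (c+1) * (1-t)^d := by continuity
  have hc2 : Continuous fun t : ℝ => t ^ c * (1-t)^(d+1) := by continuity
  have hint := intervalIntegral.integral_eq_sub_of_hasDerivAt (fun t (_ : t ∈ Set.uIcc p 1) => key t)
    (((continuous_const.mul hc1).sub (continuous_const.mul hc2)).intervalIntegrable p 1)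
  rw [intervalIntegral.integral_sub (f := fun t => (d + 1 : ℝ) * (t ^ (c+1) * (1 - t) ^ d))
      (g := fun t => (c + 1 : ℝ) * (t ^ c * (1 - t) ^ (d+1)))
      (((continuous_const.mul hc1)).intervalIntegrable p 1)
      (((continuous_const.mul hc2)).intervalIntegrable p 1),
    intervalIntegral.integral_const_mul, intervalIntegral.integral_const_mul] at hint
  have h0 : ((1:ℝ) - 1) ^ (d+1) = 0 := by norm_num
  rw [h0] at hint
  simp at hint
  linarith [hint]

lemma integral_one_sub_pow (d : ℕ) (p : ℝ) :
    ∫ t in p..1, (1 - t) ^ d = (1 - p) ^ (d + 1) / (d + 1) := by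
  have key : ∀ t : ℝ, HasDerivAt (fun t : ℝ => -((1 - t) ^ (d+1)) / (d+1)) ((1 - t) ^ d) t := by
    intro t
    have h1 : HasDerivAt (fun t : ℝ => (1:ℝ) - t) (-1) t := by
      simpa using (hasDerivAt_id t).const_sub (1:ℝ)
    have h2 := (h1.pow (d+1)).neg.div_const ((d:ℝ)+1)
    refine h2.congr_deriv ?_
    have : ((d:ℝ)+1) ≠ 0 := by positivity
    field_simp
    simp
  have hcont : Continuous fun t : ℝ => (1 - t)^d := by continuity
  rw [intervalIntegral.integral_eq_sub_of_hasDerivAt (fun t (_ : t ∈ Set.uIcc p 1) => key t)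
    (hcont.intervalIntegrable _ _)]
  norm_num
  ring

-- integral representation
lemma binCDF_eq_integral (n k : ℕ) (hk : k < n) (p : ℝ) :
    binCDF n k p = ((n - k : ℕ) : ℝ) * (n.choose k : ℝ) *
      ∫ t in p..1, t ^ k * (1 - t) ^ (n - k - 1) := by
  induction k with
  | zero =>
    have hn : 1 ≤ n := hk
    have hsum : binCDF n 0 p = (1 - p) ^ n := by
      unfold binCDF
      simp
    rw [hsum]
    have hint : (∫ t in p..1, t ^ 0 * (1 - t) ^ (n - 0 - 1)) = (1 - p) ^ n / n := by
      have : (∫ t in p..1, t ^ 0 * (1 - t) ^ (n - 0 - 1)) = ∫ t in p..1, (1 - t) ^ (n - 1) := by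
        congr 1
        ext t
        simp
      rw [this, integral_one_sub_pow]
      have e1 : n - 1 + 1 = n := by omega
      rw [e1]
      have : ((n - 1 : ℕ) : ℝ) + 1 = (n : ℝ) := by
        have := congrArg (fun x : ℕ => (x : ℝ)) e1
        push_cast at this ⊢
        linarith
      rw [this]
    rw [hint]
    have hn0 : (n : ℝ) ≠ 0 := by positivity
    simp [Nat.sub_zero]
    field_simp
  | succ k IH =>
    have hk' : k < n := by omega
    have e1 : n - k - 2 + 1 = n - k - 1 := by omega
    have e2 : n - (k + 1) = n - k - 1 := by omega
    have e3 : n - (k + 1) - 1 = n - k - 2 := by omega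
    have hsplit : binCDF n (k+1) p
        = binCDF n k p + (n.choose (k+1) : ℝ) * p ^ (k+1) * (1 - p) ^ (n - (k+1)) := by
      unfold binCDF
      rw [Finset.sum_range_succ]
    have hibp := ibp k (n - k - 2) p
    rw [e1] at hibp
    have ecast : ((n - k - 2 : ℕ) : ℝ) + 1 = ((n - k - 1 : ℕ) : ℝ) := by
      exact_mod_cast congrArg (fun x : ℕ => (x : ℝ)) e1
    rw [ecast] at hibp
    have hc : ((n.choose (k+1) : ℝ)) * ((k : ℝ) + 1) = (n.choose k : ℝ) * ((n - k : ℕ) : ℝ) := by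
      have := congrArg (fun x : ℕ => (x : ℝ)) (Nat.choose_succ_right_eq n k)
      push_cast [-Nat.cast_sub] at this
      convert this using 2 <;> push_cast <;> ring
    rw [hsplit, IH hk', e2, show n - k - 1 - 1 = n - k - 2 from by omega]
    set I1 := ∫ t in p..1, t ^ k * (1 - t) ^ (n - k - 1) with hI1
    set I2 := ∫ t in p..1, t ^ (k+1) * (1 - t) ^ (n - k - 2) with hI2
    linear_combination (-(n.choose (k+1) : ℝ)) * hibp - I1 * hc

lemma integrand_nonneg (k d : ℕ) {t : ℝ} (h0 : 0 ≤ t) (h1 : t ≤ 1) :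
    0 ≤ t ^ k * (1 - t) ^ d :=
  mul_nonneg (pow_nonneg h0 _) (pow_nonneg (by linarith) _)

lemma binCDF_mono (n k : ℕ) (hk : k < n) {p p' : ℝ} (h0 : 0 ≤ p) (hpp : p ≤ p')
    (h1 : p' ≤ 1) : binCDF n k p' ≤ binCDF n k p := by
  rw [binCDF_eq_integral n k hk p, binCDF_eq_integral n k hk p']
  have hcoef : (0:ℝ) ≤ ((n - k : ℕ) : ℝ) * (n.choose k : ℝ) := by positivity
  apply mul_le_mul_of_nonneg_left _ hcoef
  have hcont : Continuous fun t : ℝ => t ^ k * (1 - t) ^ (n - k - 1) := by continuity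
  have hsplit := intervalIntegral.integral_add_adjacent_intervals (μ := MeasureTheory.volume)
    (hcont.intervalIntegrable p p') (hcont.intervalIntegrable p' 1)
  rw [← hsplit]
  have hnn : 0 ≤ ∫ t in p..p', t ^ k * (1 - t) ^ (n - k - 1) := by
    apply intervalIntegral.integral_nonneg hpp
    intro t ht
    exact integrand_nonneg _ _ (le_trans h0 ht.1) (le_trans ht.2 (by linarith))
  linarith

-- polynomial core of the reflection inequality
lemma polycore (N K X : ℝ) (h1 : 1 ≤ K) (h2 : 2*K ≤ N) (h3 : 0 ≤ X) (h4 : X ≤ K) :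
    (N-K-1)*(N-K)*(K^2 - X^2) ≤ K^2*((N-K)^2 - X^2) := by
  nlinarith [mul_nonneg (sub_nonneg.2 (by nlinarith : X^2 ≤ K^2)) (by linarith : (0:ℝ) ≤ N - K),
    mul_nonneg (sq_nonneg X) (sub_nonneg.2 (by nlinarith : K^2 ≤ (N-K)^2))]

-- derivative nonnegativity
lemma derivpos (n k : ℕ) (hk1 : 1 ≤ k) (hk2 : 2 * k ≤ n) (x : ℝ) (h0 : 0 ≤ x)
    (hxa : x < (k:ℝ)/n) :
    0 ≤ (k:ℝ)/((k:ℝ)/n + x) - ((n-k-1:ℕ):ℝ)/(1 - (k:ℝ)/n - x)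
      + (k:ℝ)/((k:ℝ)/n - x) - ((n-k-1:ℕ):ℝ)/(1 - (k:ℝ)/n + x) := by
  have hkn : k < n := by omega
  have hnR : (0:ℝ) < n := by exact_mod_cast (by omega : 0 < n)
  have hkR : (1:ℝ) ≤ k := by exact_mod_cast hk1
  have h2kR : 2*(k:ℝ) ≤ n := by exact_mod_cast hk2
  set a : ℝ := (k:ℝ)/n with ha
  have ha0 : 0 < a := by positivity
  have h2a : 2*a ≤ 1 := by
    rw [ha, mul_div_assoc']
    rw [div_le_one hnR]
    linarith
  have ha2 : a ≤ 1 - a := by linarith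
  have hd1 : 0 < a + x := by linarith
  have hd2 : 0 < 1 - a - x := by linarith
  have hd3 : 0 < a - x := by linarith
  have hd4 : 0 < 1 - a + x := by linarith
  have hB : ((n - k - 1 : ℕ):ℝ) = (n:ℝ) - (k:ℝ) - 1 := by
    rw [show n - k - 1 = n - k - 1 from rfl, Nat.cast_sub (show 1 ≤ n - k by omega),
      Nat.cast_sub hkn.le]
    norm_num
  have hX : (n:ℝ) * x ≤ k := by
    have := (lt_div_iff₀ hnR).mp hxa
    linarith [this]
  have key := polycore (n:ℝ) (k:ℝ) ((n:ℝ)*x) hkR h2kR (by positivity) hX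
  have e1 : ((n-k-1:ℕ):ℝ)/(1 - a - x) + ((n-k-1:ℕ):ℝ)/(1 - a + x)
      = ((n-k-1:ℕ):ℝ)*(2*(1-a)) / ((1 - a - x)*(1 - a + x)) := by
    field_simp
    ring
  have e2 : (k:ℝ)/(a + x) + (k:ℝ)/(a - x) = (k:ℝ)*(2*a) / ((a + x)*(a - x)) := by
    field_simp
    ring
  have main : ((n-k-1:ℕ):ℝ)*(2*(1-a)) / ((1 - a - x)*(1 - a + x))
      ≤ (k:ℝ)*(2*a) / ((a + x)*(a - x)) := by
    rw [div_le_div_iff₀ (by nlinarith) (by nlinarith)]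
    rw [hB, ha]
    have hne : (n:ℝ) ≠ 0 := hnR.ne'
    field_simp
    nlinarith [mul_le_mul_of_nonneg_right key
      (show (0:ℝ) ≤ (n:ℝ)*((n:ℝ)*(n:ℝ)) by positivity)]
  linarith [main, e1, e2]

lemma binCDF_at_zero (n k : ℕ) : binCDF n k 0 = 1 := by
  unfold binCDF
  rw [Finset.sum_eq_single 0]
  · norm_num
  · intro j _ hj
    rw [zero_pow hj]
    ring
  · intro h
    exact absurd (Finset.mem_range.mpr (by omega)) h

lemma pointwise_refl (n k : ℕ) (hk1 : 1 ≤ k) (hk2 : 2 * k ≤ n) (s : ℝ) (h0 : 0 ≤ s)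
    (hs : s ≤ (k:ℝ)/n) :
    ((k:ℝ)/n - s)^k * (1 - ((k:ℝ)/n - s))^(n-k-1)
      ≤ ((k:ℝ)/n + s)^k * (1 - ((k:ℝ)/n + s))^(n-k-1) := by
  have hkn : k < n := by omega
  have hnR : (0:ℝ) < n := by exact_mod_cast (by omega : 0 < n)
  set a : ℝ := (k:ℝ)/n with ha
  have ha0 : 0 < a := by positivity
  have h2a : 2*a ≤ 1 := by
    rw [ha, mul_div_assoc']
    rw [div_le_one hnR]
    exact_mod_cast hk2
  rcases eq_or_lt_of_le hs with heq | hlt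
  · have hL : (a - s)^k = 0 := by
      rw [heq, sub_self]
      exact zero_pow (by omega)
    rw [hL, zero_mul]
    apply integrand_nonneg <;> linarith
  · have hd1 : 0 < a + s := by linarith
    have hd2 : 0 < 1 - a - s := by linarith
    have hd3 : 0 < a - s := by linarith
    have hd4 : 0 < 1 - a + s := by linarith
    have hd2' : (0:ℝ) < 1 - (a + s) := by linarith
    have hd4' : (0:ℝ) < 1 - (a - s) := by linarith
    have hL : 0 < (a - s)^k * (1 - (a - s))^(n-k-1) :=
      mul_pos (pow_pos hd3 _) (pow_pos hd4' _)
    have hR : 0 < (a + s)^k * (1 - (a + s))^(n-k-1) :=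
      mul_pos (pow_pos hd1 _) (pow_pos hd2' _)
    rw [← Real.log_le_log_iff hL hR,
      Real.log_mul (pow_pos hd3 _).ne' (pow_pos hd4' _).ne',
      Real.log_mul (pow_pos hd1 _).ne' (pow_pos hd2' _).ne',
      Real.log_pow, Real.log_pow, Real.log_pow, Real.log_pow,
      show 1 - (a - s) = 1 - a + s from by ring,
      show 1 - (a + s) = 1 - a - s from by ring]
    -- define g and use FTC
    set B : ℝ := ((n - k - 1 : ℕ) : ℝ) with hBdef
    set g : ℝ → ℝ := fun x => (k:ℝ) * Real.log (a+x) + B * Real.log (1-a-x)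
      - (k:ℝ) * Real.log (a-x) - B * Real.log (1-a+x) with hg
    set g' : ℝ → ℝ := fun x => (k:ℝ)/(a + x) - B/(1 - a - x)
      + (k:ℝ)/(a - x) - B/(1 - a + x) with hg'
    have hmem : ∀ x ∈ Set.uIcc 0 s, 0 ≤ x ∧ x < a := by
      intro x hx
      rw [Set.uIcc_of_le h0] at hx
      exact ⟨hx.1, lt_of_le_of_lt hx.2 hlt⟩
    have hderiv : ∀ x ∈ Set.uIcc 0 s, HasDerivAt g (g' x) x := by
      intro x hx
      obtain ⟨hx0, hxa⟩ := hmem x hx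
      have p1 : (0:ℝ) < a + x := by linarith
      have p2 : (0:ℝ) < 1 - a - x := by linarith
      have p3 : (0:ℝ) < a - x := by linarith
      have p4 : (0:ℝ) < 1 - a + x := by linarith
      have h1 := ((hasDerivAt_id x).const_add a).log p1.ne'
      have h2 := ((hasDerivAt_id x).const_sub (1-a)).log p2.ne'
      have h3 := ((hasDerivAt_id x).const_sub a).log p3.ne'
      have h4 := ((hasDerivAt_id x).const_add (1-a)).log p4.ne'
      have comb := (((h1.const_mul (k:ℝ)).add (h2.const_mul B)).sub
        (h3.const_mul (k:ℝ))).sub (h4.const_mul B)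
      refine comb.congr_deriv ?_
      rw [hg']
      simp only [id_eq]
      field_simp [p1.ne', p2.ne', p3.ne', p4.ne']
      ring
    have hg'cont : ContinuousOn g' (Set.uIcc 0 s) := by
      intro x hx
      obtain ⟨hx0, hxa⟩ := hmem x hx
      apply ContinuousAt.continuousWithinAt
      have p1 : (0:ℝ) < a + x := by linarith
      have p2 : (0:ℝ) < 1 - a - x := by linarith
      have p3 : (0:ℝ) < a - x := by linarith
      have p4 : (0:ℝ) < 1 - a + x := by linarith
      have c1 : ContinuousAt (fun y : ℝ => (k:ℝ)/(a + y)) x :=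
        continuousAt_const.div (continuousAt_const.add continuousAt_id) p1.ne'
      have c2 : ContinuousAt (fun y : ℝ => B/(1 - a - y)) x :=
        continuousAt_const.div (continuousAt_const.sub continuousAt_id) p2.ne'
      have c3 : ContinuousAt (fun y : ℝ => (k:ℝ)/(a - y)) x :=
        continuousAt_const.div (continuousAt_const.sub continuousAt_id) p3.ne'
      have c4 : ContinuousAt (fun y : ℝ => B/(1 - a + y)) x :=
        continuousAt_const.div (continuousAt_const.add continuousAt_id) p4.ne'
      exact ((c1.sub c2).add c3).sub c4
    have hFTC := intervalIntegral.integral_eq_sub_of_hasDerivAt hderiv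
      hg'cont.intervalIntegrable
    have hnn : 0 ≤ ∫ x in (0:ℝ)..s, g' x := by
      apply intervalIntegral.integral_nonneg h0
      intro x hx
      exact derivpos n k hk1 hk2 x hx.1 (lt_of_le_of_lt hx.2 hlt)
    have hg0 : g 0 = 0 := by
      rw [hg]
      simp
    have hgs : (0:ℝ) ≤ (k:ℝ) * Real.log (a+s) + B * Real.log (1-a-s)
        - (k:ℝ) * Real.log (a-s) - B * Real.log (1-a+s) := by
      have : (0:ℝ) ≤ g s := by linarith [hFTC, hnn, hg0.ge, hg0.le]
      exact this
    linarith [hgs]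

lemma keyarith (x k j : ℕ) (h1 : j < x) (h2 : x ≤ k) :
    (x - j) * (x + j) * k ^ 2 ≤ (k + 1 - j) * (k + 1 + j) * x ^ 2 := by
  have hjx : j ≤ x := h1.le
  have hjk : j ≤ k + 1 := by omega
  zify [hjx, hjk]
  have a : (j:ℤ)^2 * x^2 ≤ (j:ℤ)^2 * k^2 := by
    have : (x:ℤ)^2 ≤ (k:ℤ)^2 := by
      have : (x:ℤ) ≤ k := by exact_mod_cast h2
      nlinarith [Int.ofNat_nonneg x]
    nlinarith [sq_nonneg (j:ℤ)]
  have b : (x:ℤ)^2 * k^2 ≤ (x:ℤ)^2 * (k+1)^2 := by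
    have : (k:ℤ)^2 ≤ ((k:ℤ)+1)^2 := by nlinarith [Int.ofNat_nonneg k]
    nlinarith [sq_nonneg (x:ℤ)]
  nlinarith [a, b]

-- the key combinatorial inequality, by induction
lemma choose_pair (n k : ℕ) (hkn : k < n) (h2 : n ≤ 2 * k) :
    ∀ i, i + 1 ≤ n - k →
      n.choose (k+1+i) * k ^ (2*i+1) ≤ n.choose (k-i) * (n-k) ^ (2*i+1) := by
  intro i
  induction i with
  | zero =>
    intro _
    norm_num
    calc n.choose (k+1) * k ≤ n.choose (k+1) * (k+1) := by
          exact Nat.mul_le_mul_left _ (by omega)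
      _ = n.choose k * (n - k) := Nat.choose_succ_right_eq n k
  | succ i IH =>
    intro hi
    have hIH := IH (by omega)
    -- positive factor to cancel
    have hpos : 0 < (k + 2 + i) * (n - k + 1 + i) := by
      have : 0 < k + 2 + i := by omega
      have : 0 < n - k + 1 + i := by omega
      positivity
    apply Nat.le_of_mul_le_mul_right _ hpos
    have f1 : n.choose (k+2+i) * (k+2+i) = n.choose (k+1+i) * (n - k - 1 - i) := by
      have := Nat.choose_succ_right_eq n (k+1+i)
      calc n.choose (k+2+i) * (k+2+i) = n.choose ((k+1+i)+1) * ((k+1+i)+1) := by ring_nf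
        _ = n.choose (k+1+i) * (n - (k+1+i)) := Nat.choose_succ_right_eq n (k+1+i)
        _ = n.choose (k+1+i) * (n - k - 1 - i) := by congr 1; omega
    have f2 : n.choose (k-i) * (k-i) = n.choose (k-i-1) * (n - k + 1 + i) := by
      have h3 : k - i - 1 + 1 = k - i := by omega
      calc n.choose (k-i) * (k-i) = n.choose ((k-i-1)+1) * ((k-i-1)+1) := by rw [h3]
        _ = n.choose (k-i-1) * (n - (k-i-1)) := Nat.choose_succ_right_eq n (k-i-1)
        _ = n.choose (k-i-1) * (n - k + 1 + i) := by congr 1; omega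
    have key : (n - k - 1 - i) * (n - k + 1 + i) * k^2 ≤ (k - i) * (k + 2 + i) * (n - k)^2 := by
      have := keyarith (n - k) k (i+1) (by omega) (by omega)
      calc (n - k - 1 - i) * (n - k + 1 + i) * k^2
          = (n - k - (i+1)) * (n - k + (i+1)) * k^2 := by congr 2 <;> omega
        _ ≤ (k + 1 - (i+1)) * (k + 1 + (i+1)) * (n-k)^2 := this
        _ = (k - i) * (k + 2 + i) * (n-k)^2 := by congr 2 <;> omega
    calc n.choose (k+1+(i+1)) * k ^ (2*(i+1)+1) * ((k + 2 + i) * (n - k + 1 + i))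
        = (n.choose (k+2+i) * (k+2+i)) * k ^ (2*i+3) * (n - k + 1 + i) := by ring_nf
      _ = n.choose (k+1+i) * (n - k - 1 - i) * k ^ (2*i+3) * (n - k + 1 + i) := by rw [f1]
      _ = (n.choose (k+1+i) * k ^ (2*i+1)) * ((n - k - 1 - i) * (n - k + 1 + i) * k^2) := by
          ring_nf
      _ ≤ (n.choose (k-i) * (n-k) ^ (2*i+1)) * ((n - k - 1 - i) * (n - k + 1 + i) * k^2) :=
          Nat.mul_le_mul_right _ hIH
      _ ≤ (n.choose (k-i) * (n-k) ^ (2*i+1)) * ((k - i) * (k + 2 + i) * (n-k)^2) :=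
          Nat.mul_le_mul_left _ key
      _ = (n.choose (k-i) * (k-i)) * ((n-k) ^ (2*i+3) * (k + 2 + i)) := by ring_nf
      _ = (n.choose (k-i-1) * (n - k + 1 + i)) * ((n-k) ^ (2*i+3) * (k + 2 + i)) := by rw [f2]
      _ = n.choose (k-(i+1)) * (n-k) ^ (2*(i+1)+1) * ((k + 2 + i) * (n - k + 1 + i)) := by
          have : k - (i+1) = k - i - 1 := by omega
          rw [this]; ring_nf

-- regime 2 : n ≤ 2k, via discrete pairing
lemma regime1 (n k : ℕ) (hk1 : 1 ≤ k) (hk2 : 2 * k ≤ n) :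
    (1:ℝ)/2 ≤ binCDF n k ((k : ℝ) / n) := by
  have hkn : k < n := by omega
  have hnR : (0:ℝ) < n := by exact_mod_cast (by omega : 0 < n)
  set a : ℝ := (k:ℝ)/n with ha
  have ha0 : 0 < a := by positivity
  have h2a : 2*a ≤ 1 := by
    rw [ha, mul_div_assoc', div_le_one hnR]
    exact_mod_cast hk2
  have hcont : Continuous (fun t : ℝ => t^k * (1-t)^(n-k-1)) := by continuity
  set C : ℝ := ((n-k:ℕ):ℝ) * (n.choose k : ℝ) with hC
  have hC0 : 0 ≤ C := by positivity
  have hrep := binCDF_eq_integral n k hkn a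
  have hrep0 := binCDF_eq_integral n k hkn 0
  rw [binCDF_at_zero] at hrep0
  rw [← hC] at hrep hrep0
  have hsplit := intervalIntegral.integral_add_adjacent_intervals (μ := MeasureTheory.volume)
    (hcont.intervalIntegrable 0 a) (hcont.intervalIntegrable a 1)
  have hkey : (∫ t in (0:ℝ)..a, t^k*(1-t)^(n-k-1)) ≤ ∫ t in a..(1:ℝ), t^k*(1-t)^(n-k-1) := by
    have h1 : (∫ t in (0:ℝ)..a, t^k*(1-t)^(n-k-1))
        = ∫ x in (0:ℝ)..a, (a - x)^k * (1-(a-x))^(n-k-1) := by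
      rw [intervalIntegral.integral_comp_sub_left (fun t => t^k*(1-t)^(n-k-1)) a]
      norm_num
    have h2 : (∫ x in (0:ℝ)..a, (a + x)^k * (1-(a+x))^(n-k-1))
        = ∫ t in a..(a+a), t^k*(1-t)^(n-k-1) := by
      rw [intervalIntegral.integral_comp_add_left (fun t => t^k*(1-t)^(n-k-1)) a]
      norm_num
    have hmono : (∫ x in (0:ℝ)..a, (a-x)^k * (1-(a-x))^(n-k-1))
        ≤ ∫ x in (0:ℝ)..a, (a+x)^k * (1-(a+x))^(n-k-1) := by
      apply intervalIntegral.integral_mono_on ha0.le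
      · exact (hcont.comp (continuous_const.sub continuous_id)).intervalIntegrable 0 a
      · exact (hcont.comp (continuous_const.add continuous_id)).intervalIntegrable 0 a
      · intro x hx
        exact pointwise_refl n k hk1 hk2 x hx.1 hx.2
    have hsp2 := intervalIntegral.integral_add_adjacent_intervals (μ := MeasureTheory.volume)
      (hcont.intervalIntegrable a (a+a)) (hcont.intervalIntegrable (a+a) 1)
    have hnn2 : 0 ≤ ∫ t in (a+a)..(1:ℝ), t^k*(1-t)^(n-k-1) := by
      apply intervalIntegral.integral_nonneg (by linarith)
      intro t ht
      exact integrand_nonneg _ _ (le_trans (by linarith) ht.1) ht.2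
    linarith [h1, h2, hmono, hsp2, hnn2]
  rw [hrep]
  have h2' : C * (∫ t in (0:ℝ)..a, t^k*(1-t)^(n-k-1))
      ≤ C * ∫ t in a..(1:ℝ), t^k*(1-t)^(n-k-1) := mul_le_mul_of_nonneg_left hkey hC0
  have e : C * (∫ t in (0:ℝ)..(1:ℝ), t^k*(1-t)^(n-k-1))
      = C * (∫ t in (0:ℝ)..a, t^k*(1-t)^(n-k-1))
        + C * ∫ t in a..(1:ℝ), t^k*(1-t)^(n-k-1) := by
    rw [← hsplit]
    ring
  linarith [hrep0, e, h2']

lemma regime2 (n k : ℕ) (hk2 : n ≤ 2 * k) (hkn : k < n) :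
    (1:ℝ)/2 ≤ binCDF n k ((k : ℝ) / n) := by
  have hn : 0 < n := by omega
  have hnR : (0:ℝ) < n := by exact_mod_cast hn
  set p : ℝ := (k : ℝ) / n with hp
  have hp0 : 0 ≤ p := by positivity
  have hp1 : p ≤ 1 := by
    rw [hp, div_le_one hnR]; exact_mod_cast hkn.le
  set T : ℕ → ℝ := fun j => (n.choose j : ℝ) * p ^ j * (1 - p) ^ (n - j) with hT
  have hTnn : ∀ j, 0 ≤ T j := by
    intro j
    apply mul_nonneg (mul_nonneg (by positivity) (by positivity))
    have : (0:ℝ) ≤ 1 - p := by linarith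
    positivity
  have hq : 1 - p = ((n - k : ℕ) : ℝ) / n := by
    rw [hp, Nat.cast_sub hkn.le]; field_simp
  -- cast each term to a natural numerator over n^n
  have hcast : ∀ j, j ≤ n → T j = ((n.choose j * k ^ j * (n-k) ^ (n-j) : ℕ) : ℝ) / (n:ℝ) ^ n := by
    intro j hj
    rw [hT]
    simp only
    rw [hq, hp, div_pow, div_pow]
    push_cast
    have hnn : (n:ℝ)^n = (n:ℝ)^j * (n:ℝ)^(n-j) := by
      rw [← pow_add]; congr 1; omega
    rw [hnn]
    ring
  -- termwise pairing inequality
  have hpair : ∀ i, i < n - k → T (k+1+i) ≤ T (k-i) := by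
    intro i hi
    rw [hcast _ (by omega), hcast _ (by omega)]
    have cp := choose_pair n k hkn hk2 i (by omega)
    have ek : k^(k+1+i) = k^(2*i+1) * k^(k-i) := by
      rw [← pow_add]; congr 1; omega
    have e2 : (n-k)^(2*i+1) * (n-k)^(n-(k+1+i)) = (n-k)^(n-(k-i)) := by
      rw [← pow_add]; congr 1; omega
    have hnum : n.choose (k+1+i) * k ^ (k+1+i) * (n-k) ^ (n-(k+1+i))
        ≤ n.choose (k-i) * k ^ (k-i) * (n-k) ^ (n-(k-i)) := by
      calc n.choose (k+1+i) * k ^ (k+1+i) * (n-k) ^ (n-(k+1+i))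
          = (n.choose (k+1+i) * k^(2*i+1)) * (k^(k-i) * (n-k) ^ (n-(k+1+i))) := by
            rw [ek]; ring
        _ ≤ (n.choose (k-i) * (n-k)^(2*i+1)) * (k^(k-i) * (n-k) ^ (n-(k+1+i))) :=
            Nat.mul_le_mul_right _ cp
        _ = n.choose (k-i) * k ^ (k-i) * ((n-k)^(2*i+1) * (n-k) ^ (n-(k+1+i))) := by ring
        _ = n.choose (k-i) * k ^ (k-i) * (n-k) ^ (n-(k-i)) := by rw [e2]
    have hd : (0:ℝ) < (n:ℝ)^n := by positivity
    apply (div_le_div_iff_of_pos_right hd).mpr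
    exact_mod_cast hnum
  -- now sum manipulations
  show (1:ℝ)/2 ≤ ∑ j ∈ Finset.range (k+1), (n.choose j : ℝ) * p ^ j * (1 - p) ^ (n - j)
  have htot := sum_term_eq_one n p
  have hsplitsum : ∑ j ∈ Finset.range (n+1), T j
      = (∑ j ∈ Finset.range (k+1), T j) + ∑ i ∈ Finset.range (n-k), T (k+1+i) := by
    rw [show n+1 = (k+1) + (n-k) from by omega, Finset.sum_range_add]
  have himg : ∑ i ∈ Finset.range (n-k), T (k-i)
      = ∑ j ∈ (Finset.range (n-k)).image (fun i => k - i), T j := by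
    rw [Finset.sum_image]
    intro a ha b hb hab
    simp only [Finset.mem_coe, Finset.mem_range] at ha hb hab
    omega
  have hsub : (Finset.range (n-k)).image (fun i => k - i) ⊆ Finset.range (k+1) := by
    intro j hj
    simp only [Finset.mem_image, Finset.mem_range] at hj ⊢
    obtain ⟨a, _, rfl⟩ := hj
    omega
  have hbound : ∑ i ∈ Finset.range (n-k), T (k+1+i) ≤ ∑ j ∈ Finset.range (k+1), T j := by
    calc ∑ i ∈ Finset.range (n-k), T (k+1+i) ≤ ∑ i ∈ Finset.range (n-k), T (k-i) :=
          Finset.sum_le_sum (fun i hi => hpair i (Finset.mem_range.mp hi))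
      _ = ∑ j ∈ (Finset.range (n-k)).image (fun i => k - i), T j := himg
      _ ≤ ∑ j ∈ Finset.range (k+1), T j :=
          Finset.sum_le_sum_of_subset_of_nonneg hsub (fun j _ _ => hTnn j)
  have : (∑ j ∈ Finset.range (k+1), T j) + ∑ i ∈ Finset.range (n-k), T (k+1+i) = 1 := by
    rw [← hsplitsum]; exact htot
  linarith

theorem stmt_9 (z : ℕ) (p : ℝ) (hp0 : 0 ≤ p) (hp1 : p ≤ 1) :
    (1 : ℝ) / 2 ≤ binCDF z ⌈(z : ℝ) * p⌉₊ p := by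
  set c := ⌈(z : ℝ) * p⌉₊ with hc
  by_cases hcz : z ≤ c
  · rw [binCDF_of_ge z c p hcz]
    norm_num
  · push_neg at hcz
    have hz : 0 < z := by omega
    have hzR : (0:ℝ) < z := by exact_mod_cast hz
    have hzp : (z:ℝ) * p ≤ c := Nat.le_ceil _
    have hpc : p ≤ (c:ℝ) / z := by
      rw [le_div_iff₀ hzR]
      linarith [hzp, mul_comm p (z:ℝ)]
    have hc1 : (c:ℝ) / z ≤ 1 := by
      rw [div_le_one hzR]
      exact_mod_cast hcz.le
    have hmono := binCDF_mono z c hcz hp0 hpc hc1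
    have hgoal : (1:ℝ)/2 ≤ binCDF z c ((c:ℝ)/z) := by
      by_cases hc0 : c = 0
      · have hp00 : (c:ℝ)/z = 0 := by rw [hc0]; simp
        rw [hp00, hc0]
        unfold binCDF
        norm_num
      · by_cases hreg : 2 * c ≤ z
        · exact regime1 z c (by omega) hreg
        · exact regime2 z c (by omega) hcz
    linarith
end

section
/- For 0 < λ < 1, ν = 1-λ, 0 < δ ≤ 1/2, and integer l ≥ 0, define z*(l,δ,λ) = min{z ∈ ℤ, z ≥ l : B_{z,l}(ν) ≤ δ}. Then z*(l,δ,λ) ≥ l/ν. -/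
open Finset

set_option maxHeartbeats 1600000

/-- `z*(l,δ,λ)`: the smallest `z ≥ l` with `B_{z,l}(1-λ) ≤ δ`. -/
noncomputable def zStar (l : ℕ) (δ lam : ℝ) : ℕ :=
  sInf {z : ℕ | l ≤ z ∧ binCDF z l (1 - lam) ≤ δ}

noncomputable def Wfn (n m i : ℕ) : ℝ := (n.choose i : ℝ) * (m:ℝ)^i * ((n - m : ℕ):ℝ)^(n-i)

noncomputable def Bfn (n m j : ℕ) : ℝ := if j ≤ m then Wfn n m (m - j) else 0

lemma binCDF_nonneg {p : ℝ} (hp0 : 0 ≤ p) (hp1 : p ≤ 1) (z l : ℕ) : 0 ≤ binCDF z l p := by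
  apply Finset.sum_nonneg
  intro j _
  have : (0:ℝ) ≤ 1 - p := by linarith
  positivity

lemma binCDF_zero_l (z : ℕ) (p : ℝ) : binCDF z 0 p = (1 - p) ^ z := by
  simp [binCDF]

lemma binCDF_self (l : ℕ) (p : ℝ) : binCDF l l p = 1 := by
  have h := add_pow p (1 - p) l
  simp only [add_sub_cancel, one_pow] at h
  have h2 : binCDF l l p = (p + (1 - p)) ^ l := by
    rw [add_pow, binCDF]
    apply Finset.sum_congr rfl
    intro j _
    ring
  rw [h2]
  norm_num

lemma binCDF_succ_succ (n l : ℕ) (p : ℝ) :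
    binCDF (n+1) (l+1) p = p * binCDF n l p + (1 - p) * binCDF n (l+1) p := by
  have e1 : ∀ j ∈ Finset.range (l+1),
      ((n+1).choose (j+1) : ℝ) * p ^ (j+1) * (1 - p) ^ (n + 1 - (j+1))
      = p * ((n.choose j : ℝ) * p ^ j * (1 - p) ^ (n - j))
        + (1 - p) * ((n.choose (j+1) : ℝ) * p ^ (j+1) * (1 - p) ^ (n - (j+1))) := by
    intro j _
    rw [Nat.choose_succ_succ]
    push_cast
    by_cases hj : j + 1 ≤ n
    · have h2 : n - j = (n - (j+1)) + 1 := by omega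
      rw [h2, pow_succ]
      ring
    · have h0 : n.choose (j+1) = 0 := Nat.choose_eq_zero_of_lt (by omega)
      have h3 : n - j = 0 := by omega
      rw [h0, h3]
      push_cast
      ring
  have e3 : (1 - p) * binCDF n (l+1) p
      = ∑ j ∈ Finset.range (l+1), (1 - p) * ((n.choose (j+1) : ℝ) * p ^ (j+1) * (1 - p) ^ (n - (j+1)))
        + (1 - p) * ((n.choose 0 : ℝ) * p ^ 0 * (1 - p) ^ (n - 0)) := by
    rw [binCDF, Finset.mul_sum, Finset.sum_range_succ' _ (l+1)]
  have e2 : p * binCDF n l p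
      = ∑ j ∈ Finset.range (l+1), p * ((n.choose j : ℝ) * p ^ j * (1 - p) ^ (n - j)) := by
    rw [binCDF, Finset.mul_sum]
  rw [binCDF, Finset.sum_range_succ' _ (l+1), Finset.sum_congr rfl e1, Finset.sum_add_distrib,
    e2, e3]
  have : ((n+1).choose 0 : ℝ) * p ^ 0 * (1 - p) ^ (n + 1 - 0)
      = (1 - p) * ((n.choose 0 : ℝ) * p ^ 0 * (1 - p) ^ (n - 0)) := by
    simp [pow_succ]
    ring
  rw [this]
  ring

lemma binCDF_zero_n (l : ℕ) (p : ℝ) : binCDF 0 l p = 1 := by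
  rw [binCDF, Finset.sum_range_succ' _ l]
  simp

lemma binCDF_le_succ (n l : ℕ) {p : ℝ} (hp0 : 0 ≤ p) (hp1 : p ≤ 1) :
    binCDF n l p ≤ binCDF n (l+1) p := by
  rw [binCDF, binCDF, Finset.sum_range_succ _ (l+1)]
  have : (0:ℝ) ≤ 1 - p := by linarith
  have h : (0:ℝ) ≤ (n.choose (l+1) : ℝ) * p ^ (l+1) * (1 - p) ^ (n - (l+1)) := by positivity
  linarith

lemma binCDF_anti : ∀ (n l : ℕ) {p p' : ℝ}, 0 ≤ p → p ≤ p' → p' ≤ 1 →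
    binCDF n l p' ≤ binCDF n l p := by
  intro n
  induction n with
  | zero => intro l p p' _ _ _; rw [binCDF_zero_n, binCDF_zero_n]
  | succ n ih =>
    intro l p p' hp0 hpp' hp'1
    match l with
    | 0 =>
      have e : ∀ q : ℝ, binCDF (n+1) 0 q = (1-q)^(n+1) := by
        intro q; rw [binCDF]; simp
      rw [e, e]
      have h1 : (0:ℝ) ≤ 1 - p' := by linarith
      have h2 : 1 - p' ≤ 1 - p := by linarith
      exact pow_le_pow_left₀ h1 h2 (n+1)
    | l + 1 =>
      rw [binCDF_succ_succ, binCDF_succ_succ]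
      have hA := ih l hp0 hpp' hp'1 (p := p) (p' := p')
      have hB := ih (l+1) hp0 hpp' hp'1 (p := p) (p' := p')
      have hAB' : binCDF n l p' ≤ binCDF n (l+1) p' := binCDF_le_succ n l (by linarith) hp'1
      have hAB : binCDF n l p ≤ binCDF n (l+1) p := binCDF_le_succ n l hp0 (by linarith)
      nlinarith [mul_nonneg (sub_nonneg.2 hpp') (sub_nonneg.2 hAB'),
        mul_nonneg hp0 (sub_nonneg.2 hA), mul_nonneg (sub_nonneg.2 (le_trans hpp' hp'1)) (sub_nonneg.2 hB)]

lemma Wfn_nonneg (n m i : ℕ) : 0 ≤ Wfn n m i := by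
  unfold Wfn; positivity

lemma Wfn_pos {n m i : ℕ} (hm : 1 ≤ m) (hmn : m < n) (hi : i ≤ n) : 0 < Wfn n m i := by
  unfold Wfn
  have h1 : 0 < (n.choose i : ℝ) := by exact_mod_cast Nat.choose_pos hi
  have h2 : (0:ℝ) < (m:ℝ) := by exact_mod_cast hm
  have h3 : (0:ℝ) < ((n - m : ℕ):ℝ) := by
    have : 0 < n - m := by omega
    exact_mod_cast this
  positivity

lemma Wfn_step {n m i : ℕ} (hi : i < n) :
    Wfn n m (i+1) * ((i:ℝ)+1) * ((n - m : ℕ):ℝ) = Wfn n m i * ((n - i : ℕ):ℝ) * (m:ℝ) := by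
  unfold Wfn
  have hc : (n.choose (i+1) : ℝ) * ((i:ℝ)+1) = (n.choose i : ℝ) * ((n - i : ℕ):ℝ) := by
    exact_mod_cast congrArg (Nat.cast : ℕ → ℝ) (Nat.choose_succ_right_eq n i)
  have hpow : ((n - m : ℕ):ℝ)^(n-(i+1)) * ((n - m : ℕ):ℝ) = ((n - m : ℕ):ℝ)^(n-i) := by
    rw [← pow_succ]
    congr 1
    omega
  calc (n.choose (i+1) : ℝ) * (m:ℝ)^(i+1) * ((n-m:ℕ):ℝ)^(n-(i+1)) * ((i:ℝ)+1) * ((n-m:ℕ):ℝ)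
      = ((n.choose (i+1) : ℝ) * ((i:ℝ)+1)) * (m:ℝ)^(i+1) * (((n-m:ℕ):ℝ)^(n-(i+1)) * ((n-m:ℕ):ℝ)) := by ring
    _ = ((n.choose i : ℝ) * ((n - i : ℕ):ℝ)) * ((m:ℝ)^i * (m:ℝ)) * ((n-m:ℕ):ℝ)^(n-i) := by
        rw [hc, hpow, pow_succ]
    _ = (n.choose i : ℝ) * (m:ℝ)^i * ((n-m:ℕ):ℝ)^(n-i) * ((n - i : ℕ):ℝ) * (m:ℝ) := by ring

lemma Wfn_sum {n m : ℕ} (hmn : m ≤ n) :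
    ∑ i ∈ Finset.range (n+1), Wfn n m i = ((n:ℝ))^n := by
  have h := add_pow ((m:ℝ)) (((n - m : ℕ):ℝ)) n
  have hnm : (m:ℝ) + ((n - m : ℕ):ℝ) = (n:ℝ) := by
    rw [Nat.cast_sub hmn]; ring
  rw [hnm] at h
  rw [h]
  apply Finset.sum_congr rfl
  intro i _
  unfold Wfn
  ring

lemma sum_mul_choose_pow (n : ℕ) (x y : ℝ) :
    ∑ i ∈ Finset.range (n+1), (i:ℝ) * ((n.choose i : ℝ) * x^i * y^(n-i))
      = (n:ℝ) * x * (x + y)^(n-1) := by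
  match n with
  | 0 => simp
  | n + 1 =>
    rw [Finset.sum_range_succ' _ (n+1)]
    simp only [Nat.cast_zero, zero_mul, add_zero]
    have this2 : ∀ i ∈ Finset.range (n+1), ((i+1:ℕ):ℝ) * (((n+1).choose (i+1) : ℝ) * x^(i+1) * y^(n+1-(i+1)))
        = ((n:ℝ)+1) * x * ((n.choose i : ℝ) * x^i * y^(n-i)) := by
      intro i _
      have hee : n + 1 - (i + 1) = n - i := by omega
      rw [hee]
      have hc : ((n+1).choose (i+1) : ℝ) * ((i:ℝ)+1) = ((n:ℝ)+1) * (n.choose i : ℝ) := by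
        have h5 := Nat.add_one_mul_choose_eq n i
        exact_mod_cast congrArg (Nat.cast : ℕ → ℝ) h5.symm
      push_cast
      rw [pow_succ]
      linear_combination x^i * x * y^(n-i) * hc
    rw [Finset.sum_congr rfl this2, ← Finset.mul_sum]
    have hb : ∑ i ∈ Finset.range (n+1), (n.choose i : ℝ) * x^i * y^(n-i) = (x+y)^n := by
      rw [add_pow]
      apply Finset.sum_congr rfl
      intro i _
      ring
    rw [hb]
    have : (n + 1 : ℕ) - 1 = n := by omega
    rw [this]
    push_cast
    ring

lemma Wfn_mean {n m : ℕ} (hmn : m ≤ n) :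
    ∑ i ∈ Finset.range (n+1), (i:ℝ) * Wfn n m i = (m:ℝ) * ((n:ℝ))^n := by
  have h := sum_mul_choose_pow n ((m:ℝ)) (((n - m : ℕ):ℝ))
  have hnm : (m:ℝ) + ((n - m : ℕ):ℝ) = (n:ℝ) := by
    rw [Nat.cast_sub hmn]; ring
  rw [hnm] at h
  unfold Wfn
  rw [h]
  match n with
  | 0 =>
    have : m = 0 := by omega
    simp [this]
  | n + 1 =>
    have h6 : (n + 1 : ℕ) - 1 = n := by omega
    rw [h6]
    push_cast
    ring

lemma Wfn_reflect {n m i : ℕ} (hm : m ≤ n) (hi : i ≤ n) : Wfn n m i = Wfn n (n-m) (n-i) := by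
  unfold Wfn
  rw [Nat.choose_symm hi]
  have h1 : n - (n - m) = m := by omega
  have h2 : n - (n - i) = i := by omega
  rw [h1, h2]
  ring

lemma pair_le {n m : ℕ} (hm : 1 ≤ m) (h2 : 2*m ≤ n) :
    ∀ j, 1 ≤ j → j ≤ m → Wfn n m (m-j) ≤ Wfn n m (m+j-1) := by
  have hmn : m < n := by omega
  have hUc : ((n - m : ℕ):ℝ) = (n:ℝ) - (m:ℝ) := Nat.cast_sub (by omega)
  intro j hj
  induction j, hj using Nat.le_induction with
  | base =>
    intro _
    have hi : m - 1 < n := by omega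
    have hstep := Wfn_step (n := n) (m := m) (i := m - 1) hi
    rw [show m - 1 + 1 = m by omega] at hstep
    rw [show ((m - 1 : ℕ):ℝ) = (m:ℝ) - 1 by rw [Nat.cast_sub hm]; push_cast; ring] at hstep
    rw [show ((n - (m-1) : ℕ):ℝ) = (n:ℝ) - (m:ℝ) + 1 by
      rw [show n - (m-1) = (n - m) + 1 by omega]; push_cast [hUc]; ring] at hstep
    rw [hUc] at hstep
    rw [show m + 1 - 1 = m by omega]
    -- hstep : W m * (M - 1 + 1) * (N - M) = W (m-1) * (N - M + 1) * M
    have hW := Wfn_nonneg n m m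
    have hMpos : (0:ℝ) < (m:ℝ) := by exact_mod_cast hm
    have hUM : (m:ℝ) ≤ (n:ℝ) - (m:ℝ) := by
      have := (Nat.cast_le (α := ℝ)).2 h2; push_cast at this; linarith
    have hpos : (0:ℝ) < ((n:ℝ) - (m:ℝ) + 1) * (m:ℝ) := mul_pos (by linarith) hMpos
    apply le_of_mul_le_mul_right _ hpos
    calc Wfn n m (m-1) * (((n:ℝ) - m + 1) * m) = Wfn n m m * (((n:ℝ) - m) * m) := by
          linear_combination (-1 : ℝ) * hstep
      _ ≤ Wfn n m m * (((n:ℝ) - m + 1) * m) := by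
          apply mul_le_mul_of_nonneg_left _ hW
          nlinarith
  | succ j hj1 ih =>
    intro hjm
    have ihh := ih (by omega)
    have hi1 : m - j - 1 < n := by omega
    have hs1 := Wfn_step (n := n) (m := m) (i := m - j - 1) hi1
    rw [show m - j - 1 + 1 = m - j by omega] at hs1
    have hi2 : m + j - 1 < n := by omega
    have hs2 := Wfn_step (n := n) (m := m) (i := m + j - 1) hi2
    rw [show m + j - 1 + 1 = m + j by omega] at hs2
    rw [show m + (j+1) - 1 = m + j by omega, show m - (j+1) = m - j - 1 by omega]
    have c1 : ((m - j - 1 : ℕ):ℝ) = (m:ℝ) - (j:ℝ) - 1 := by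
      rw [show m - j - 1 = m - (j+1) by omega, Nat.cast_sub (by omega)]; push_cast; ring
    have c2 : ((n - (m - j - 1) : ℕ):ℝ) = (n:ℝ) - (m:ℝ) + (j:ℝ) + 1 := by
      rw [show n - (m - j - 1) = (n - m) + (j + 1) by omega]; push_cast [hUc]; ring
    have c3 : ((m + j - 1 : ℕ):ℝ) = (m:ℝ) + (j:ℝ) - 1 := by
      rw [Nat.cast_sub (by omega : 1 ≤ m + j)]; push_cast; ring
    have c4 : ((n - (m + j - 1) : ℕ):ℝ) = (n:ℝ) - (m:ℝ) - (j:ℝ) + 1 := by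
      rw [show n - (m + j - 1) = (n - m) - j + 1 by omega]
      push_cast [Nat.cast_sub (show j ≤ n - m by omega), hUc]; ring
    rw [c1, c2, hUc] at hs1
    rw [c3, c4, hUc] at hs2
    have hW1 := Wfn_nonneg n m (m - j)
    have hW2 := Wfn_nonneg n m (m + j - 1)
    have hW3 := Wfn_nonneg n m (m + j)
    have hW4 := Wfn_nonneg n m (m - j - 1)
    have hMpos : (0:ℝ) < (m:ℝ) := by exact_mod_cast hm
    have hJ1 : (1:ℝ) ≤ (j:ℝ) := by exact_mod_cast hj1
    have hJM : (j:ℝ) + 1 ≤ (m:ℝ) := by exact_mod_cast hjm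
    have hUM : (m:ℝ) ≤ (n:ℝ) - (m:ℝ) := by
      have := (Nat.cast_le (α := ℝ)).2 h2; push_cast at this; linarith
    have hUpos : (0:ℝ) < (n:ℝ) - (m:ℝ) := by linarith
    have hc1 : (0:ℝ) < (n:ℝ) - (m:ℝ) + (j:ℝ) + 1 := by linarith
    have hc2 : (0:ℝ) < (n:ℝ) - (m:ℝ) - (j:ℝ) + 1 := by linarith
    have core2 : ((m:ℝ)-(j:ℝ))*((m:ℝ)+(j:ℝ))*((n:ℝ)-(m:ℝ))^2
        ≤ ((n:ℝ)-(m:ℝ)+(j:ℝ)+1)*((n:ℝ)-(m:ℝ)-(j:ℝ)+1)*(m:ℝ)^2 := by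
      nlinarith [mul_nonneg (mul_nonneg (sq_nonneg (j:ℝ)) (by linarith : (0:ℝ) ≤ (n:ℝ)-(m:ℝ)-(m:ℝ))) (by linarith : (0:ℝ) ≤ (n:ℝ)-(m:ℝ)+(m:ℝ)), sq_nonneg (m:ℝ), hMpos, hUpos]
    have hpos : (0:ℝ) < ((n:ℝ)-(m:ℝ)+(j:ℝ)+1) * (m:ℝ) * ((((n:ℝ)-(m:ℝ)-(j:ℝ)+1)) * (m:ℝ)) := by positivity
    apply le_of_mul_le_mul_right _ hpos
    calc Wfn n m (m-j-1) * (((n:ℝ)-(m:ℝ)+(j:ℝ)+1) * (m:ℝ) * ((((n:ℝ)-(m:ℝ)-(j:ℝ)+1)) * (m:ℝ)))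
        = (Wfn n m (m-j) * (((m:ℝ)-(j:ℝ)-1)+1) * ((n:ℝ)-(m:ℝ))) * ((((n:ℝ)-(m:ℝ)-(j:ℝ)+1)) * (m:ℝ)) := by
          linear_combination (-((((n:ℝ)-(m:ℝ)-(j:ℝ)+1)) * (m:ℝ))) * hs1
      _ ≤ (Wfn n m (m+j-1) * (((m:ℝ)-(j:ℝ)-1)+1) * ((n:ℝ)-(m:ℝ))) * ((((n:ℝ)-(m:ℝ)-(j:ℝ)+1)) * (m:ℝ)) := by
          have hMJ : (0:ℝ) ≤ ((m:ℝ)-(j:ℝ)-1)+1 := by linarith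
          apply mul_le_mul_of_nonneg_right _ (by positivity)
          apply mul_le_mul_of_nonneg_right _ (by linarith : (0:ℝ) ≤ (n:ℝ)-(m:ℝ))
          exact mul_le_mul_of_nonneg_right ihh hMJ
      _ = Wfn n m (m+j) * ((((m:ℝ)+(j:ℝ)-1)+1)*(((m:ℝ)-(j:ℝ)-1)+1)*((n:ℝ)-(m:ℝ))^2) := by
          linear_combination ((((m:ℝ)-(j:ℝ)-1)+1) * ((n:ℝ)-(m:ℝ))) * hs2.symm
      _ ≤ Wfn n m (m+j) * (((n:ℝ)-(m:ℝ)+(j:ℝ)+1) * (m:ℝ) * ((((n:ℝ)-(m:ℝ)-(j:ℝ)+1)) * (m:ℝ))) := by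
          apply mul_le_mul_of_nonneg_left _ hW3
          nlinarith [core2]

lemma tail_gt_half {n m : ℕ} (hm : 1 ≤ m) (h2 : 2*m ≤ n) :
    ((n:ℝ))^n < 2 * ∑ j ∈ Finset.range (n - m + 1), Wfn n m (m + j) := by
  have hmn : m < n := by omega
  have hlow : ∑ i ∈ Finset.range m, Wfn n m i ≤ ∑ j ∈ Finset.range m, Wfn n m (m + j) := by
    rw [← Finset.sum_range_reflect (fun i => Wfn n m i) m]
    apply Finset.sum_le_sum
    intro j hj
    have hj' : j < m := Finset.mem_range.1 hj
    have e1 : m - 1 - j = m - (j+1) := by omega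
    have e2 : m + j = m + (j+1) - 1 := by omega
    rw [e1, e2]
    exact pair_le hm h2 (j+1) (by omega) (by omega)
  have hsplit : ∑ i ∈ Finset.range (n+1), Wfn n m i
      = ∑ i ∈ Finset.range m, Wfn n m i + ∑ j ∈ Finset.range (n - m + 1), Wfn n m (m + j) := by
    rw [show n + 1 = m + (n - m + 1) by omega]
    exact Finset.sum_range_add (fun i => Wfn n m i) m (n - m + 1)
  obtain ⟨k, hk, hk1⟩ : ∃ k, n - m + 1 = m + k ∧ 1 ≤ k := ⟨n - m + 1 - m, by omega, by omega⟩
  have hsplit2 : ∑ j ∈ Finset.range (n - m + 1), Wfn n m (m + j)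
      = ∑ j ∈ Finset.range m, Wfn n m (m + j)
        + ∑ j ∈ Finset.range k, Wfn n m (m + (m + j)) := by
    rw [hk]
    exact Finset.sum_range_add (fun j => Wfn n m (m + j)) m k
  have hpos : 0 < ∑ j ∈ Finset.range k, Wfn n m (m + (m + j)) := by
    have h0 : (0:ℕ) ∈ Finset.range k := by
      apply Finset.mem_range.2; omega
    calc (0:ℝ) < Wfn n m (m + (m + 0)) := Wfn_pos hm hmn (by omega)
      _ ≤ ∑ j ∈ Finset.range k, Wfn n m (m + (m + j)) :=
        Finset.single_le_sum (fun i _ => Wfn_nonneg n m (m + (m + i))) h0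
  have := Wfn_sum (n := n) (m := m) (by omega)
  rw [hsplit] at this
  linarith

section CrossSteps
variable {n m j : ℕ} (hm : 1 ≤ m) (h2 : 2*m + 1 ≤ n)

lemma jlt_of_hc (hm : 1 ≤ m) (h2 : 2*m + 1 ≤ n) (hc : n*j*(j+1) ≤ m*(n-m)) : j + 1 ≤ m := by
  by_contra hcon
  have hjm : m ≤ j := by omega
  have h1 : n*m*(m+1) ≤ n*j*(j+1) := by
    apply Nat.mul_le_mul
    · exact Nat.mul_le_mul_left n hjm
    · omega
  have h2' : m*(n-m) ≤ m*n := Nat.mul_le_mul_left m (by omega)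
  have h3 : n*m*(m+1) ≤ n*m*1 := by
    calc n*m*(m+1) ≤ m*n := le_trans h1 (le_trans hc h2')
      _ = n*m*1 := by ring
  have hpos : 0 < n*m := Nat.mul_pos (by omega) (by omega)
  have := Nat.le_of_mul_le_mul_left (by linarith [h3] : n*m*(m+1) ≤ n*m*1) hpos
  omega

-- both step lemmas in one framework
lemma hs_down (hm : 1 ≤ m) (h2 : 2*m + 1 ≤ n) (hjm : j + 1 ≤ m) :
    Wfn n m (m-j) * ((m:ℝ)-(j:ℝ)) * ((n:ℝ)-(m:ℝ))
      = Wfn n m (m-(j+1)) * ((n:ℝ)-(m:ℝ)+(j:ℝ)+1) * (m:ℝ) := by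
  have hUc : ((n - m : ℕ):ℝ) = (n:ℝ) - (m:ℝ) := Nat.cast_sub (by omega)
  have hi : m - j - 1 < n := by omega
  have hs := Wfn_step (n := n) (m := m) (i := m - j - 1) hi
  rw [show m - j - 1 + 1 = m - j by omega] at hs
  rw [show ((m - j - 1 : ℕ):ℝ) = (m:ℝ) - (j:ℝ) - 1 by
    rw [show m - j - 1 = m - (j+1) by omega, Nat.cast_sub (by omega)]; push_cast; ring] at hs
  rw [show ((n - (m - j - 1) : ℕ):ℝ) = (n:ℝ) - (m:ℝ) + (j:ℝ) + 1 by
    rw [show n - (m - j - 1) = (n - m) + (j + 1) by omega]; push_cast [hUc]; ring] at hs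
  rw [hUc] at hs
  rw [show m - (j+1) = m - j - 1 by omega]
  linear_combination hs

lemma hs_up (hm : 1 ≤ m) (h2 : 2*m + 1 ≤ n) (hjm : j + 1 ≤ m) :
    Wfn n m (m+j+1) * ((m:ℝ)+(j:ℝ)+1) * ((n:ℝ)-(m:ℝ))
      = Wfn n m (m+j) * ((n:ℝ)-(m:ℝ)-(j:ℝ)) * (m:ℝ) := by
  have hUc : ((n - m : ℕ):ℝ) = (n:ℝ) - (m:ℝ) := Nat.cast_sub (by omega)
  have hi : m + j < n := by omega
  have hs := Wfn_step (n := n) (m := m) (i := m + j) hi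
  rw [show ((m + j : ℕ):ℝ) = (m:ℝ) + (j:ℝ) by push_cast; try ring] at hs
  rw [show ((n - (m + j) : ℕ):ℝ) = (n:ℝ) - (m:ℝ) - (j:ℝ) by
    rw [show n - (m + j) = (n - m) - j by omega, Nat.cast_sub (by omega : j ≤ n - m), hUc]; try ring] at hs
  rw [hUc] at hs
  linear_combination hs

lemma down_step (hm : 1 ≤ m) (h2 : 2*m + 1 ≤ n) (hc : n*j*(j+1) ≤ m*(n-m))
    (hd : Wfn n m (m+j) ≤ Wfn n m (m-j)) :
    Wfn n m (m+j+1) ≤ Wfn n m (m-(j+1)) := by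
  have hjm : j + 1 ≤ m := jlt_of_hc hm h2 hc
  have hs1 := hs_down (j := j) hm h2 hjm
  have hs2 := hs_up (j := j) hm h2 hjm
  have hMpos : (0:ℝ) < (m:ℝ) := by exact_mod_cast hm
  have hJM : (j:ℝ) + 1 ≤ (m:ℝ) := by exact_mod_cast hjm
  have hJ0 : (0:ℝ) ≤ (j:ℝ) := by positivity
  have hUM : (m:ℝ) + 1 ≤ (n:ℝ) - (m:ℝ) := by
    have := (Nat.cast_le (α := ℝ)).2 h2; push_cast at this; linarith
  have hcR : ((n:ℝ))*(j:ℝ)*((j:ℝ)+1) ≤ (m:ℝ)*((n:ℝ)-(m:ℝ)) := by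
    have := (Nat.cast_le (α := ℝ)).2 hc
    push_cast [Nat.cast_sub (show m ≤ n by omega)] at this
    linarith
  have core : ((n:ℝ)-(m:ℝ)+(j:ℝ)+1)*((n:ℝ)-(m:ℝ)-(j:ℝ))*(m:ℝ)^2
      ≤ ((m:ℝ)+(j:ℝ)+1)*((m:ℝ)-(j:ℝ))*((n:ℝ)-(m:ℝ))^2 := by
    nlinarith [mul_nonneg (by linarith : (0:ℝ) ≤ (n:ℝ)-(m:ℝ)-(m:ℝ))
      (by nlinarith : (0:ℝ) ≤ (m:ℝ)*((n:ℝ)-(m:ℝ)) - (j:ℝ)*((j:ℝ)+1)*((n:ℝ)))]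
  have hW1 := Wfn_nonneg n m (m + j)
  have hW2 := Wfn_nonneg n m (m + j + 1)
  have hpos : (0:ℝ) < ((m:ℝ)+(j:ℝ)+1)*((n:ℝ)-(m:ℝ))*(((m:ℝ)-(j:ℝ))*((n:ℝ)-(m:ℝ))) := by
    have : (0:ℝ) < (m:ℝ)-(j:ℝ) := by linarith
    have h5 : (0:ℝ) < (n:ℝ)-(m:ℝ) := by linarith
    positivity
  apply le_of_mul_le_mul_right _ hpos
  calc Wfn n m (m+j+1) * (((m:ℝ)+(j:ℝ)+1)*((n:ℝ)-(m:ℝ))*(((m:ℝ)-(j:ℝ))*((n:ℝ)-(m:ℝ))))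
      = (Wfn n m (m+j) * (((n:ℝ)-(m:ℝ)-(j:ℝ))*(m:ℝ))) * (((m:ℝ)-(j:ℝ))*((n:ℝ)-(m:ℝ))) := by
        linear_combination (((m:ℝ)-(j:ℝ))*((n:ℝ)-(m:ℝ))) * hs2
    _ ≤ (Wfn n m (m-j) * (((n:ℝ)-(m:ℝ)-(j:ℝ))*(m:ℝ))) * (((m:ℝ)-(j:ℝ))*((n:ℝ)-(m:ℝ))) := by
        apply mul_le_mul_of_nonneg_right _ (by nlinarith)
        apply mul_le_mul_of_nonneg_right hd (by nlinarith)
    _ = Wfn n m (m-(j+1)) * ((((n:ℝ)-(m:ℝ)+(j:ℝ)+1)*((n:ℝ)-(m:ℝ)-(j:ℝ)))*(m:ℝ)^2) := by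
        linear_combination (((n:ℝ)-(m:ℝ)-(j:ℝ))*(m:ℝ)) * hs_down (j := j) hm h2 hjm
    _ ≤ Wfn n m (m-(j+1)) * (((m:ℝ)+(j:ℝ)+1)*((n:ℝ)-(m:ℝ))*(((m:ℝ)-(j:ℝ))*((n:ℝ)-(m:ℝ)))) := by
        apply mul_le_mul_of_nonneg_left _ (Wfn_nonneg n m (m-(j+1)))
        nlinarith [core]

lemma up_step (hm : 1 ≤ m) (h2 : 2*m + 1 ≤ n) (hc : m*(n-m) ≤ n*j*(j+1))
    (hd : Bfn n m j ≤ Wfn n m (m+j)) :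
    Bfn n m (j+1) ≤ Wfn n m (m+j+1) := by
  by_cases hjm : j + 1 ≤ m
  · rw [Bfn, if_pos hjm]
    have hdj : Wfn n m (m-j) ≤ Wfn n m (m+j) := by
      rw [Bfn, if_pos (by omega)] at hd; exact hd
    have hs1 := hs_down (j := j) hm h2 hjm
    have hs2 := hs_up (j := j) hm h2 hjm
    have hMpos : (0:ℝ) < (m:ℝ) := by exact_mod_cast hm
    have hJM : (j:ℝ) + 1 ≤ (m:ℝ) := by exact_mod_cast hjm
    have hJ0 : (0:ℝ) ≤ (j:ℝ) := by positivity
    have hUM : (m:ℝ) + 1 ≤ (n:ℝ) - (m:ℝ) := by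
      have := (Nat.cast_le (α := ℝ)).2 h2; push_cast at this; linarith
    have hcR : (m:ℝ)*((n:ℝ)-(m:ℝ)) ≤ ((n:ℝ))*(j:ℝ)*((j:ℝ)+1) := by
      have := (Nat.cast_le (α := ℝ)).2 hc
      push_cast [Nat.cast_sub (show m ≤ n by omega)] at this
      linarith
    have core : ((m:ℝ)+(j:ℝ)+1)*((m:ℝ)-(j:ℝ))*((n:ℝ)-(m:ℝ))^2
        ≤ ((n:ℝ)-(m:ℝ)+(j:ℝ)+1)*((n:ℝ)-(m:ℝ)-(j:ℝ))*(m:ℝ)^2 := by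
      nlinarith [mul_nonneg (by linarith : (0:ℝ) ≤ (n:ℝ)-(m:ℝ)-(m:ℝ))
        (by nlinarith : (0:ℝ) ≤ (j:ℝ)*((j:ℝ)+1)*((n:ℝ)) - (m:ℝ)*((n:ℝ)-(m:ℝ)))]
    have hpos : (0:ℝ) < ((n:ℝ)-(m:ℝ)+(j:ℝ)+1)*(m:ℝ)*(((n:ℝ)-(m:ℝ)-(j:ℝ))*(m:ℝ)) := by
      have h5 : (0:ℝ) < (n:ℝ)-(m:ℝ)-(j:ℝ) := by linarith
      have h6 : (0:ℝ) < (n:ℝ)-(m:ℝ)+(j:ℝ)+1 := by linarith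
      positivity
    apply le_of_mul_le_mul_right _ hpos
    calc Wfn n m (m-(j+1)) * (((n:ℝ)-(m:ℝ)+(j:ℝ)+1)*(m:ℝ)*(((n:ℝ)-(m:ℝ)-(j:ℝ))*(m:ℝ)))
        = (Wfn n m (m-j) * (((m:ℝ)-(j:ℝ))*((n:ℝ)-(m:ℝ)))) * (((n:ℝ)-(m:ℝ)-(j:ℝ))*(m:ℝ)) := by
          linear_combination (-(((n:ℝ)-(m:ℝ)-(j:ℝ))*(m:ℝ))) * hs1
      _ ≤ (Wfn n m (m+j) * (((m:ℝ)-(j:ℝ))*((n:ℝ)-(m:ℝ)))) * (((n:ℝ)-(m:ℝ)-(j:ℝ))*(m:ℝ)) := by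
          apply mul_le_mul_of_nonneg_right _ (by nlinarith)
          apply mul_le_mul_of_nonneg_right hdj (by nlinarith)
      _ = Wfn n m (m+j+1) * (((m:ℝ)+(j:ℝ)+1)*((m:ℝ)-(j:ℝ))*((n:ℝ)-(m:ℝ))^2) := by
          linear_combination (-(((m:ℝ)-(j:ℝ))*((n:ℝ)-(m:ℝ)))) * hs2
      _ ≤ Wfn n m (m+j+1) * (((n:ℝ)-(m:ℝ)+(j:ℝ)+1)*(m:ℝ)*(((n:ℝ)-(m:ℝ)-(j:ℝ))*(m:ℝ))) := by
          apply mul_le_mul_of_nonneg_left _ (Wfn_nonneg n m (m+j+1))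
          nlinarith [core]
  · rw [Bfn, if_neg hjm]
    exact Wfn_nonneg n m (m+j+1)

lemma below_lemma (hm : 1 ≤ m) (h2 : 2*m + 1 ≤ n) :
    ∀ j, n*j*(j+1) ≤ m*(n-m) → Wfn n m (m+j+1) ≤ Wfn n m (m-(j+1)) := by
  intro j
  induction j with
  | zero =>
    intro hc
    apply down_step hm h2 hc
    simp
  | succ j ih =>
    intro hc
    have hprev : n*j*(j+1) ≤ m*(n-m) := by
      have : n*j*(j+1) ≤ n*(j+1)*(j+1+1) := by
        apply Nat.mul_le_mul
        · exact Nat.mul_le_mul_left n (by omega)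
        · omega
      omega
    have ihh := ih hprev
    have := down_step hm h2 hc (by
      rw [show m + (j+1) = m + j + 1 by omega]
      exact le_trans ihh (le_of_eq rfl))
    exact this

lemma Bfn_nonneg (n m j : ℕ) : 0 ≤ Bfn n m j := by
  rw [Bfn]; split
  · exact Wfn_nonneg n m (m - j)
  · exact le_rfl

/-- abstract single-crossing lemma -/
lemma cross_sum {J t : ℕ} {a b : ℕ → ℝ}
    (h1 : ∀ j, j < J → j < t → a j ≤ b j)
    (h2 : ∀ j, j < J → t ≤ j → b j ≤ a j)
    (hmean : ∑ j ∈ Finset.range J, ((j:ℝ)+1) * a j = ∑ j ∈ Finset.range J, ((j:ℝ)+1) * b j) :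
    ∑ j ∈ Finset.range J, a j ≤ ∑ j ∈ Finset.range J, b j := by
  have key : ∀ j ∈ Finset.range J, ((j:ℝ)+1) * (b j - a j) ≤ ((t:ℝ)+1) * (b j - a j) := by
    intro j hj
    have hjJ : j < J := Finset.mem_range.1 hj
    by_cases hjt : j < t
    · have h := h1 j hjJ hjt
      have : (j:ℝ) + 1 ≤ (t:ℝ) + 1 := by
        have : (j:ℝ) ≤ (t:ℝ) := by exact_mod_cast le_of_lt hjt
        linarith
      nlinarith
    · have h := h2 j hjJ (by omega)
      have : (t:ℝ) + 1 ≤ (j:ℝ) + 1 := by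
        have : (t:ℝ) ≤ (j:ℝ) := by exact_mod_cast Nat.le_of_not_lt hjt
        linarith
      nlinarith
  have hsum := Finset.sum_le_sum key
  have e1 : ∑ j ∈ Finset.range J, ((j:ℝ)+1) * (b j - a j) = 0 := by
    have : ∑ j ∈ Finset.range J, ((j:ℝ)+1) * (b j - a j)
        = ∑ j ∈ Finset.range J, ((j:ℝ)+1) * b j - ∑ j ∈ Finset.range J, ((j:ℝ)+1) * a j := by
      rw [← Finset.sum_sub_distrib]
      apply Finset.sum_congr rfl; intro j _; ring
    rw [this, hmean]; ring
  have e2 : ∑ j ∈ Finset.range J, ((t:ℝ)+1) * (b j - a j)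
      = ((t:ℝ)+1) * (∑ j ∈ Finset.range J, b j - ∑ j ∈ Finset.range J, a j) := by
    rw [← Finset.mul_sum, Finset.sum_sub_distrib]
  rw [e1, e2] at hsum
  have ht : (0:ℝ) < (t:ℝ) + 1 := by positivity
  nlinarith

lemma mean_identity {n m : ℕ} (hm : 1 ≤ m) (h2 : 2*m + 1 ≤ n) :
    ∑ j ∈ Finset.range (n - m), ((j:ℝ)+1) * Wfn n m (m+1+j)
      = ∑ j ∈ Finset.range (n - m), ((j:ℝ)+1) * Bfn n m (j+1) := by
  have hmn : m ≤ n := by omega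
  -- centered mean: ∑ (i - m) W i = 0
  have hc : ∑ i ∈ Finset.range (n+1), ((i:ℝ) - (m:ℝ)) * Wfn n m i = 0 := by
    have e : ∑ i ∈ Finset.range (n+1), ((i:ℝ) - (m:ℝ)) * Wfn n m i
        = ∑ i ∈ Finset.range (n+1), (i:ℝ) * Wfn n m i
          - (m:ℝ) * ∑ i ∈ Finset.range (n+1), Wfn n m i := by
      rw [Finset.mul_sum, ← Finset.sum_sub_distrib]
      apply Finset.sum_congr rfl; intro i _; ring
    rw [e, Wfn_mean hmn, Wfn_sum hmn]; ring
  -- split at m+1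
  have hsplit : ∑ i ∈ Finset.range (n+1), ((i:ℝ) - (m:ℝ)) * Wfn n m i
      = ∑ i ∈ Finset.range (m+1), ((i:ℝ) - (m:ℝ)) * Wfn n m i
        + ∑ j ∈ Finset.range (n - m), (((m+1+j:ℕ):ℝ) - (m:ℝ)) * Wfn n m (m+1+j) := by
    rw [show n + 1 = (m+1) + (n - m) by omega]
    exact Finset.sum_range_add (fun i => ((i:ℝ) - (m:ℝ)) * Wfn n m i) (m+1) (n-m)
  have hcast : ∀ j ∈ Finset.range (n - m), (((m+1+j:ℕ):ℝ) - (m:ℝ)) * Wfn n m (m+1+j)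
      = ((j:ℝ)+1) * Wfn n m (m+1+j) := by
    intro j _
    have : ((m+1+j:ℕ):ℝ) = (m:ℝ) + 1 + (j:ℝ) := by push_cast; ring
    rw [this]; ring
  -- reflect the lower part
  have hrefl : ∑ i ∈ Finset.range (m+1), ((i:ℝ) - (m:ℝ)) * Wfn n m i
      = - ∑ j ∈ Finset.range (m+1), (j:ℝ) * Wfn n m (m - j) := by
    rw [← Finset.sum_range_reflect (fun i => ((i:ℝ) - (m:ℝ)) * Wfn n m i) (m+1)]
    rw [← Finset.sum_neg_distrib]
    apply Finset.sum_congr rfl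
    intro j hj
    have hjm : j ≤ m := by
      have := Finset.mem_range.1 hj; omega
    have e1 : m + 1 - 1 - j = m - j := by omega
    rw [e1]
    have e2 : ((m - j:ℕ):ℝ) = (m:ℝ) - (j:ℝ) := Nat.cast_sub hjm
    rw [e2]
    ring
  -- lower part in terms of Bfn
  have hB : ∑ j ∈ Finset.range (m+1), (j:ℝ) * Wfn n m (m - j)
      = ∑ j ∈ Finset.range (n - m), ((j:ℝ)+1) * Bfn n m (j+1) := by
    rw [Finset.sum_range_succ' (fun j => (j:ℝ) * Wfn n m (m - j)) m]
    simp only [Nat.cast_zero, zero_mul, add_zero]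
    have e : ∀ j ∈ Finset.range m, ((j+1:ℕ):ℝ) * Wfn n m (m - (j+1))
        = ((j:ℝ)+1) * Bfn n m (j+1) := by
      intro j hj
      have hjm : j + 1 ≤ m := by have := Finset.mem_range.1 hj; omega
      rw [Bfn, if_pos hjm]
      push_cast
      ring
    rw [Finset.sum_congr rfl e]
    apply Finset.sum_subset
    · apply Finset.range_subset_range.2; omega
    · intro j _ hj
      have : ¬ (j + 1 ≤ m) := by
        have : ¬ j < m := fun h => hj (Finset.mem_range.2 h); omega
      rw [Bfn, if_neg this]
      ring
  rw [hsplit, Finset.sum_congr rfl hcast, hrefl, hB] at hc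
  linarith

lemma head_gt_half {n m : ℕ} (hm : 1 ≤ m) (h2 : 2*m + 1 ≤ n) :
    ((n:ℝ))^n < 2 * ∑ i ∈ Finset.range (m+1), Wfn n m i := by
  have hmn : m < n := by omega
  set J := n - m with hJ
  set a : ℕ → ℝ := fun j => Wfn n m (m+1+j) with ha
  set b : ℕ → ℝ := fun j => Bfn n m (j+1) with hb
  -- find crossing index t
  have main : ∑ j ∈ Finset.range J, a j ≤ ∑ j ∈ Finset.range J, b j := by
    by_cases hall : ∀ j, j < J → a j ≤ b j
    · exact cross_sum (t := J) (fun j hj _ => hall j hj) (fun j hj ht => by omega)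
        (mean_identity hm h2)
    · push_neg at hall
      obtain ⟨j₀, hj₀J, hj₀⟩ := hall
      set s : Set ℕ := {j | j < J ∧ b j < a j} with hs
      have hne : s.Nonempty := ⟨j₀, hj₀J, hj₀⟩
      set t := sInf s with htdef
      have htmem : t ∈ s := Nat.sInf_mem hne
      have htJ : t < J := htmem.1
      have htlt : b t < a t := htmem.2
      -- key : m*(n-m) < n*t*(t+1)
      have hkey : m*(n-m) < n*t*(t+1) := by
        by_contra hcon
        have hc : n*t*(t+1) ≤ m*(n-m) := by omega
        have := below_lemma hm h2 t hc
        have htm : t + 1 ≤ m := by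
          by_contra hcon2
          have hjm : m ≤ t := by omega
          have h1 : n*m*(m+1) ≤ n*t*(t+1) :=
            Nat.mul_le_mul (Nat.mul_le_mul_left n hjm) (by omega)
          have h2' : m*(n-m) ≤ m*n := Nat.mul_le_mul_left m (by omega)
          have h3 : n*m*(m+1) ≤ n*m*1 := by
            calc n*m*(m+1) ≤ m*n := le_trans h1 (le_trans hc h2')
              _ = n*m*1 := by ring
          have hpos : 0 < n*m := Nat.mul_pos (by omega) (by omega)
          have := Nat.le_of_mul_le_mul_left (by linarith [h3] : n*m*(m+1) ≤ n*m*1) hpos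
          omega
        have hbt : b t = Wfn n m (m-(t+1)) := by
          rw [hb]; simp only; rw [Bfn, if_pos htm]
        have hat : a t = Wfn n m (m+t+1) := by
          rw [ha]; simp only
          congr 1; omega
        rw [hbt, hat] at htlt
        linarith [below_lemma hm h2 t hc]
      -- above: for j ≥ t, b j ≤ a j
      have habove : ∀ j, t ≤ j → b j ≤ a j := by
        intro j hj
        induction j, hj using Nat.le_induction with
        | base => exact le_of_lt htlt
        | succ j hj ih =>
          have hcj : m*(n-m) ≤ n*(j+1)*((j+1)+1) := by
            have h5 : t*(t+1) ≤ (j+1)*((j+1)+1) := Nat.mul_le_mul (by omega) (by omega)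
            have h6 : n*t*(t+1) ≤ n*(j+1)*((j+1)+1) := by
              calc n*t*(t+1) = n*(t*(t+1)) := by ring
                _ ≤ n*((j+1)*((j+1)+1)) := Nat.mul_le_mul_left n h5
                _ = n*(j+1)*((j+1)+1) := by ring
            omega
          have hd : Bfn n m (j+1) ≤ Wfn n m (m+(j+1)) := by
            have : b j ≤ a j := ih
            rw [hb, ha] at this
            simp only at this
            rw [show m+(j+1) = m+1+j by omega]
            exact this
          have step := up_step (j := j+1) hm h2 hcj hd
          rw [hb, ha]
          simp only
          rw [show m+1+(j+1) = m+(j+1)+1 by omega]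
          exact step
      exact cross_sum (t := t)
        (fun j hjJ hjt => by
          have : j ∉ s := Nat.notMem_of_lt_sInf (by rw [← htdef]; exact hjt)
          rw [hs] at this
          simp only [Set.mem_setOf_eq, not_and, not_lt] at this
          exact this hjJ)
        (fun j hjJ hjt => habove j hjt)
        (mean_identity hm h2)
  -- conclude
  have hhead : ∑ i ∈ Finset.range (m+1), Wfn n m i
      = Wfn n m m + ∑ j ∈ Finset.range J, b j := by
    rw [← Finset.sum_range_reflect (fun i => Wfn n m i) (m+1)]
    rw [Finset.sum_range_succ' (fun j => Wfn n m (m+1-1-j)) m]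
    have e0 : m + 1 - 1 - 0 = m := by omega
    rw [e0]
    have e : ∀ j ∈ Finset.range m, Wfn n m (m+1-1-(j+1)) = Bfn n m (j+1) := by
      intro j hj
      have hjm : j + 1 ≤ m := by have := Finset.mem_range.1 hj; omega
      rw [show m+1-1-(j+1) = m - (j+1) from by omega, Bfn, if_pos hjm]
    rw [Finset.sum_congr rfl e]
    have epad : ∑ j ∈ Finset.range m, Bfn n m (j+1) = ∑ j ∈ Finset.range J, b j := by
      rw [hb]
      apply Finset.sum_subset
      · apply Finset.range_subset_range.2; omega
      · intro j _ hj
        have hnot : ¬ (j + 1 ≤ m) := by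
          have : ¬ j < m := fun h => hj (Finset.mem_range.2 h); omega
        simp only [Bfn, if_neg hnot]
    rw [epad]
    ring
  have htail : ∑ i ∈ Finset.range (n+1), Wfn n m i
      = ∑ i ∈ Finset.range (m+1), Wfn n m i + ∑ j ∈ Finset.range J, a j := by
    rw [show n + 1 = (m+1) + J by omega]
    exact Finset.sum_range_add (fun i => Wfn n m i) (m+1) J
  have hWm : 0 < Wfn n m m := Wfn_pos hm hmn (by omega)
  have := Wfn_sum (n := n) (m := m) (by omega)
  rw [htail] at this
  nlinarith [main]

lemma med {n l : ℕ} (hl : 1 ≤ l) (hln : l < n) :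
    ((n:ℝ))^n < 2 * ∑ i ∈ Finset.range (l+1), Wfn n l i := by
  by_cases hcase : 2*l + 1 ≤ n
  · exact head_gt_half hl hcase
  · set m := n - l with hm
    have hm1 : 1 ≤ m := by omega
    have h2m : 2*m ≤ n := by omega
    have htail := tail_gt_half hm1 h2m
    have hnm : n - m + 1 = l + 1 := by omega
    rw [hnm] at htail
    have hsums : ∑ i ∈ Finset.range (l+1), Wfn n l i
        = ∑ j ∈ Finset.range (l+1), Wfn n m (m + j) := by
      rw [← Finset.sum_range_reflect (fun j => Wfn n m (m + j)) (l+1)]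
      apply Finset.sum_congr rfl
      intro i hi
      have hil : i ≤ l := by have := Finset.mem_range.1 hi; omega
      rw [Wfn_reflect (show l ≤ n by omega) (show i ≤ n by omega)]
      rw [show n - l = m from rfl]
      congr 1
      omega
    rw [hsums]
    exact htail

lemma binCDF_ratio {n l : ℕ} (hl : 1 ≤ l) (hln : l < n) :
    1/2 < binCDF n l ((l:ℝ)/(n:ℝ)) := by
  have hn0 : (0:ℝ) < (n:ℝ) := by exact_mod_cast (show 0 < n by omega)
  have hn0' : (n:ℝ) ≠ 0 := ne_of_gt hn0
  have hpow : (0:ℝ) < (n:ℝ)^n := by positivity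
  have h1 : (1 : ℝ) - (l:ℝ)/(n:ℝ) = ((n - l : ℕ):ℝ)/(n:ℝ) := by
    rw [Nat.cast_sub (le_of_lt hln)]
    field_simp
  have hb : binCDF n l ((l:ℝ)/(n:ℝ)) = (∑ i ∈ Finset.range (l+1), Wfn n l i) / (n:ℝ)^n := by
    rw [binCDF, Finset.sum_div]
    apply Finset.sum_congr rfl
    intro j hj
    have hjl : j ≤ l := by have := Finset.mem_range.1 hj; omega
    have hnj : (n:ℝ)^j * (n:ℝ)^(n-j) = (n:ℝ)^n := by
      rw [← pow_add]; congr 1; omega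
    rw [h1, div_pow, div_pow, Wfn, eq_div_iff (ne_of_gt hpow), ← hnj]
    field_simp
  rw [hb, lt_div_iff₀ hpow]
  have := med hl hln
  linarith

lemma exists_small {lam δ : ℝ} (hlam0 : 0 < lam) (hlam1 : lam < 1) (hδ0 : 0 < δ) (l : ℕ) :
    ∃ z : ℕ, l ≤ z ∧ binCDF z l (1 - lam) ≤ δ := by
  have hbound : ∀ z : ℕ, l ≤ z → 1 ≤ z →
      binCDF z l (1 - lam) ≤ ((l:ℝ)+1) * (z:ℝ)^l * lam^(z-l) := by
    intro z hlz h1z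
    have hterm : ∀ j ∈ Finset.range (l+1),
        (z.choose j : ℝ) * (1-lam)^j * (1-(1-lam))^(z-j) ≤ (z:ℝ)^l * lam^(z-l) := by
      intro j hj
      have hjl : j ≤ l := by have := Finset.mem_range.1 hj; omega
      have h1 : (z.choose j : ℝ) ≤ (z:ℝ)^l := by
        calc (z.choose j : ℝ) ≤ ((z^j : ℕ):ℝ) := by exact_mod_cast Nat.choose_le_pow z j
          _ ≤ ((z^l : ℕ):ℝ) := by
            exact_mod_cast Nat.pow_le_pow_right (by omega) hjl
          _ = (z:ℝ)^l := by push_cast; ring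
      have h2 : (1-lam)^j ≤ 1 := by
        apply pow_le_one₀ (by linarith) (by linarith)
      have h3 : (1-(1-lam))^(z-j) ≤ lam^(z-l) := by
        rw [show 1-(1-lam) = lam by ring]
        exact pow_le_pow_of_le_one (le_of_lt hlam0) (le_of_lt hlam1) (by omega)
      have hz0 : (0:ℝ) ≤ (z:ℝ)^l := by positivity
      have hc0 : (0:ℝ) ≤ (z.choose j : ℝ) := by positivity
      have hl0 : (0:ℝ) ≤ (1-lam)^j := pow_nonneg (by linarith) j
      have hlam0' : (0:ℝ) ≤ (1-(1-lam))^(z-j) := by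
        rw [show 1-(1-lam) = lam by ring]; positivity
      have hstep : (z.choose j : ℝ) * (1-lam)^j ≤ (z:ℝ)^l * 1 := mul_le_mul h1 h2 hl0 hz0
      calc (z.choose j : ℝ) * (1-lam)^j * (1-(1-lam))^(z-j)
          ≤ ((z:ℝ)^l * 1) * lam^(z-l) := mul_le_mul hstep h3 hlam0' (by positivity)
        _ = (z:ℝ)^l * lam^(z-l) := by ring
    calc binCDF z l (1 - lam) ≤ ∑ j ∈ Finset.range (l+1), (z:ℝ)^l * lam^(z-l) :=
        Finset.sum_le_sum hterm
      _ = ((l:ℝ)+1) * (z:ℝ)^l * lam^(z-l) := by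
        rw [Finset.sum_const, Finset.card_range]
        push_cast; ring
  -- the bound tends to 0
  have hlamne : lam ≠ 0 := ne_of_gt hlam0
  have habs : |lam| < 1 := by rw [abs_of_pos hlam0]; exact hlam1
  have htend : Filter.Tendsto (fun z : ℕ => (((l:ℝ)+1)/lam^l) * ((z:ℝ)^l * lam^z))
      Filter.atTop (nhds 0) := by
    have := (tendsto_pow_const_mul_const_pow_of_abs_lt_one l habs).const_mul (((l:ℝ)+1)/lam^l)
    simpa using this
  have hev := (htend.eventually_lt_const hδ0).and (Filter.eventually_ge_atTop (max l 1))
  obtain ⟨z, hz1, hz2⟩ := hev.exists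
  refine ⟨z, by omega, ?_⟩
  have heq : (((l:ℝ)+1)/lam^l) * ((z:ℝ)^l * lam^z) = ((l:ℝ)+1) * (z:ℝ)^l * lam^(z-l) := by
    have : lam^(z-l) * lam^l = lam^z := by
      rw [← pow_add]; congr 1; omega
    field_simp
    rw [← this]; ring
  have hb := hbound z (by omega) (by omega)
  rw [heq] at hz1
  linarith

theorem stmt_10 (lam δ : ℝ) (hlam0 : 0 < lam) (hlam1 : lam < 1)
    (hδ0 : 0 < δ) (hδ : δ ≤ 1 / 2) (l : ℕ) :
    (l : ℝ) / (1 - lam) ≤ (zStar l δ lam : ℝ) := by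
  by_cases hl0 : l = 0
  · subst hl0
    simp
  have hl1 : 1 ≤ l := by omega
  have hν0 : (0:ℝ) < 1 - lam := by linarith
  have hne : {z : ℕ | l ≤ z ∧ binCDF z l (1 - lam) ≤ δ}.Nonempty :=
    exists_small hlam0 hlam1 hδ0 l
  have hmem := Nat.sInf_mem hne
  rw [zStar]
  set z := sInf {z : ℕ | l ≤ z ∧ binCDF z l (1 - lam) ≤ δ} with hzdef
  obtain ⟨hlz, hcdf⟩ := hmem
  by_contra hcon
  push_neg at hcon
  -- hcon : (z:ℝ) < l / (1-lam), i.e. z*(1-lam) < l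
  have hzn : (z:ℝ) * (1 - lam) < (l:ℝ) := by
    have := (lt_div_iff₀ hν0).1 hcon
    linarith
  have hlz' : l < z := by
    rcases Nat.lt_or_ge l z with h | h
    · exact h
    · exfalso
      rw [show l = z by omega, binCDF_self] at hcdf
      linarith
  have hz0 : (0:ℝ) < (z:ℝ) := by exact_mod_cast (show 0 < z by omega)
  have hp1 : (l:ℝ)/(z:ℝ) ≤ 1 := by
    rw [div_le_one hz0]
    exact_mod_cast le_of_lt hlz'
  have hνp : 1 - lam ≤ (l:ℝ)/(z:ℝ) := by
    rw [le_div_iff₀ hz0]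
    nlinarith
  have hmono := binCDF_anti z l (by linarith) hνp hp1
  have hhalf := binCDF_ratio hl1 hlz'
  linarith
end CrossSteps
end

section
/- For a fixed integer l ≥ 0 and 0 < λ < 1, ν = 1-λ, let z*(δ) = min{z ≥ l : B_{z,l}(ν) ≤ δ}. Then z*(δ)/ln δ → 1/ln λ as δ → 0⁺. -/
open Filter

lemma bin_lower (lam : ℝ) (hlam0 : 0 < lam) (hlam1 : lam < 1) (z l : ℕ) :
    lam ^ z ≤ binCDF z l (1 - lam) := by
  have hν0 : (0:ℝ) ≤ 1 - lam := by linarith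
  unfold binCDF
  have h0 : (0:ℕ) ∈ Finset.range (l+1) := by simp
  have := Finset.single_le_sum
    (f := fun j => (z.choose j : ℝ) * (1-lam) ^ j * (1 - (1-lam)) ^ (z - j))
    (fun j _ => by
      have h1 : (0:ℝ) ≤ 1 - (1 - lam) := by linarith
      positivity) h0
  simpa using this

lemma bin_upper (lam : ℝ) (hlam0 : 0 < lam) (hlam1 : lam < 1) (z l : ℕ)
    (hz1 : 1 ≤ z) (hzl : l ≤ z) :
    binCDF z l (1 - lam) ≤ ((l:ℝ)+1) * (z:ℝ)^l * lam ^ (z - l) := by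
  have hν0 : (0:ℝ) ≤ 1 - lam := by linarith
  have hν1 : 1 - lam ≤ 1 := by linarith
  unfold binCDF
  have key : ∀ j ∈ Finset.range (l+1),
      (z.choose j : ℝ) * (1-lam) ^ j * (1 - (1-lam)) ^ (z - j)
        ≤ (z:ℝ)^l * lam ^ (z - l) := by
    intro j hj
    have hj' : j ≤ l := Nat.lt_succ_iff.mp (Finset.mem_range.mp hj)
    have h1 : (z.choose j : ℝ) ≤ (z:ℝ)^l := by
      have := Nat.choose_le_pow z j
      have h2 : (z:ℝ)^j ≤ (z:ℝ)^l := by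
        apply pow_le_pow_right₀ _ hj'
        exact_mod_cast hz1
      calc (z.choose j : ℝ) ≤ (z:ℝ)^j := by exact_mod_cast this
        _ ≤ (z:ℝ)^l := h2
    have h2 : (1-lam) ^ j ≤ 1 := pow_le_one₀ hν0 hν1
    have h3 : (1 - (1-lam)) ^ (z - j) ≤ lam ^ (z - l) := by
      have he : 1 - (1 - lam) = lam := by ring
      rw [he]
      exact pow_le_pow_of_le_one hlam0.le hlam1.le (Nat.sub_le_sub_left hj' z)
    have hc0 : (0:ℝ) ≤ (z.choose j : ℝ) := by positivity
    have hp0 : (0:ℝ) ≤ (1-lam) ^ j := by positivity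
    have hq0 : (0:ℝ) ≤ (1 - (1-lam)) ^ (z - j) := by
      have : 1 - (1 - lam) = lam := by ring
      rw [this]; positivity
    calc (z.choose j : ℝ) * (1-lam) ^ j * (1 - (1-lam)) ^ (z - j)
        ≤ (z:ℝ)^l * 1 * (1 - (1-lam)) ^ (z - j) := by
          apply mul_le_mul_of_nonneg_right _ hq0
          exact mul_le_mul h1 h2 hp0 (by positivity)
      _ = (z:ℝ)^l * (1 - (1-lam)) ^ (z - j) := by ring
      _ ≤ (z:ℝ)^l * (lam ^ (z - l)) := by
          apply mul_le_mul_of_nonneg_left h3 (by positivity)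
  calc ∑ j ∈ Finset.range (l + 1), (z.choose j : ℝ) * (1-lam) ^ j * (1 - (1-lam)) ^ (z - j)
      ≤ ∑ _j ∈ Finset.range (l + 1), (z:ℝ)^l * lam ^ (z - l) :=
        Finset.sum_le_sum key
    _ = ((l:ℝ)+1) * ((z:ℝ)^l * lam ^ (z - l)) := by
        rw [Finset.sum_const, Finset.card_range]
        push_cast; ring
    _ = ((l:ℝ)+1) * (z:ℝ)^l * lam ^ (z - l) := by ring

theorem stmt_11 (lam : ℝ) (hlam0 : 0 < lam) (hlam1 : lam < 1) (l : ℕ) :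
    Tendsto (fun δ : ℝ => (zStar l δ lam : ℝ) / Real.log δ)
      (nhdsWithin 0 (Set.Ioi 0)) (nhds (1 / Real.log lam)) := by
  have hL : Real.log lam < 0 := Real.log_neg hlam0 hlam1
  set L := Real.log lam with hLdef
  have hLne : L ≠ 0 := ne_of_lt hL
  have hnegL : 0 < -L := by linarith
  rw [Metric.tendsto_nhds]
  intro ε hε
  set b : ℝ := (ε/2) * (-L) with hbdef
  have hb0 : 0 < b := mul_pos (by linarith) hnegL
  set c₁ : ℝ := -1/L + ε/2 with hc₁def
  have hinvL : 0 < -1/L := by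
    rw [neg_div]
    exact neg_pos.mpr (div_neg_of_pos_of_neg one_pos hL)
  have hc₁ : 0 < c₁ := by have := hε; simp only [hc₁def]; linarith
  set K : ℝ := ((l:ℝ)+1) / lam^l with hKdef
  have hK : 0 < K := by positivity
  set C : ℝ := K * ((c₁+1)/b)^l with hCdef
  have hC0 : 0 < C := by positivity
  clear_value b c₁ K C
  -- eventual bound: C * ((b*s)^l * exp (-(b*s))) < 1
  have h1 : Tendsto (fun s : ℝ => C * ((b*s)^l * Real.exp (-(b*s)))) atTop (nhds 0) := by
    have h0 := Real.tendsto_pow_mul_exp_neg_atTop_nhds_zero l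
    have h2 : Tendsto (fun s : ℝ => b * s) atTop atTop :=
      Tendsto.const_mul_atTop hb0 tendsto_id
    have h3 := (h0.comp h2).const_mul C
    simpa [Function.comp] using h3
  have h3 : ∀ᶠ s in atTop, C * ((b*s)^l * Real.exp (-(b*s))) < 1 :=
    h1.eventually_lt_const one_pos
  have hlog : Tendsto (fun δ : ℝ => -Real.log δ) (nhdsWithin 0 (Set.Ioi 0)) atTop :=
    tendsto_neg_atBot_atTop.comp Real.tendsto_log_nhdsGT_zero
  have hev := hlog.eventually (h3.and ((eventually_ge_atTop (1:ℝ)).and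
    ((eventually_ge_atTop ((2*((l:ℝ)+1))/ε)).and (eventually_ge_atTop (4/ε)))))
  filter_upwards [hev, self_mem_nhdsWithin] with δ hδs hδ0
  simp only [Set.mem_Ioi] at hδ0
  obtain ⟨hC1, hs1, hs2, hs3⟩ := hδs
  set s : ℝ := -Real.log δ with hsdef
  clear_value s
  have hs0 : 0 < s := lt_of_lt_of_le one_pos hs1
  have hδexp : δ = Real.exp (-s) := by
    rw [hsdef, neg_neg, Real.exp_log hδ0]
  -- the witness m
  set m : ℕ := ⌈c₁ * s⌉₊ with hmdef
  have hm_ge : c₁ * s ≤ (m:ℝ) := Nat.le_ceil _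
  have hm_le : (m:ℝ) ≤ c₁ * s + 1 := by
    rw [hmdef]
    exact_mod_cast (Nat.ceil_lt_add_one (show (0:ℝ) ≤ c₁ * s by positivity)).le
  clear_value m
  have hcs_big : (l:ℝ) + 1 ≤ c₁ * s := by
    have h4 : (ε/2) * s ≥ (ε/2) * ((2*((l:ℝ)+1))/ε) :=
      mul_le_mul_of_nonneg_left hs2 (by linarith)
    have h5 : (ε/2) * ((2*((l:ℝ)+1))/ε) = (l:ℝ)+1 := by
      field_simp
    have h6 : (ε/2) * s ≤ c₁ * s := by
      apply mul_le_mul_of_nonneg_right _ hs0.le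
      rw [hc₁def]; linarith
    linarith
  have hml : l ≤ m := by
    have : (l:ℝ) ≤ (m:ℝ) := by linarith
    exact_mod_cast this
  have hm1 : 1 ≤ m := by
    have : (1:ℝ) ≤ (m:ℝ) := by
      have : (0:ℝ) ≤ (l:ℝ) := by positivity
      linarith
    exact_mod_cast this
  -- B(m) ≤ δ
  have hBm : binCDF m l (1 - lam) ≤ δ := by
    have hub := bin_upper lam hlam0 hlam1 m l hm1 hml
    have hpow : lam ^ (m - l) = lam ^ m / lam ^ l := by
      rw [eq_div_iff (pow_ne_zero _ (ne_of_gt hlam0)), ← pow_add,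
        Nat.sub_add_cancel hml]
    have hlamm : lam ^ m = Real.exp ((m:ℝ) * L) := by
      rw [← Real.exp_log (pow_pos hlam0 m), Real.log_pow, hLdef]
    have hmL : (m:ℝ) * L ≤ -s + -(b*s) := by
      have h7 : (m:ℝ) * L ≤ (c₁ * s) * L := mul_le_mul_of_nonpos_right hm_ge hL.le
      have h8 : (c₁ * s) * L = -s + -(b*s) := by
        simp only [hc₁def, hbdef]
        field_simp
      linarith
    have hlamm_le : lam ^ m ≤ δ * Real.exp (-(b*s)) := by
      rw [hlamm, hδexp, ← Real.exp_add]
      exact Real.exp_le_exp.mpr hmL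
    have hm_le2 : (m:ℝ) ≤ (c₁+1)*s := by nlinarith
    have hml' : (m:ℝ)^l ≤ ((c₁+1)/b)^l * (b*s)^l := by
      rw [← mul_pow]
      have he : (c₁+1)/b * (b*s) = (c₁+1)*s := by field_simp
      rw [he]
      exact pow_le_pow_left₀ (by positivity) hm_le2 l
    have heq : ((l:ℝ)+1) * (m:ℝ)^l * lam ^ (m - l) = K * ((m:ℝ)^l * lam ^ m) := by
      rw [hpow, hKdef]
      field_simp
    have hfinal : K * ((m:ℝ)^l * lam ^ m)
        ≤ K * ((((c₁+1)/b)^l * (b*s)^l) * (δ * Real.exp (-(b*s)))) := by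
      apply mul_le_mul_of_nonneg_left _ hK.le
      apply mul_le_mul hml' hlamm_le (by positivity) (by positivity)
    have hrw : K * ((((c₁+1)/b)^l * (b*s)^l) * (δ * Real.exp (-(b*s))))
        = δ * (C * ((b*s)^l * Real.exp (-(b*s)))) := by
      rw [hCdef]; ring
    calc binCDF m l (1 - lam) ≤ ((l:ℝ)+1) * (m:ℝ)^l * lam ^ (m - l) := hub
      _ = K * ((m:ℝ)^l * lam ^ m) := heq
      _ ≤ K * ((((c₁+1)/b)^l * (b*s)^l) * (δ * Real.exp (-(b*s)))) := hfinal
      _ = δ * (C * ((b*s)^l * Real.exp (-(b*s)))) := hrw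
      _ ≤ δ * 1 := mul_le_mul_of_nonneg_left hC1.le hδ0.le
      _ = δ := mul_one δ
  -- zStar properties
  have hmS : m ∈ {z : ℕ | l ≤ z ∧ binCDF z l (1 - lam) ≤ δ} := ⟨hml, hBm⟩
  have hzs_le : zStar l δ lam ≤ m := Nat.sInf_le hmS
  have hzs_mem : zStar l δ lam ∈ {z : ℕ | l ≤ z ∧ binCDF z l (1 - lam) ≤ δ} :=
    Nat.sInf_mem ⟨m, hmS⟩
  obtain ⟨hzl, hzB⟩ := hzs_mem
  set z : ℝ := (zStar l δ lam : ℝ) with hzdef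
  -- lower bound on z : z * L ≤ -s
  have hzL : z * L ≤ -s := by
    have h9 : lam ^ (zStar l δ lam) ≤ δ :=
      le_trans (bin_lower lam hlam0 hlam1 _ l) hzB
    have h10 : Real.log (lam ^ (zStar l δ lam)) ≤ Real.log δ :=
      Real.log_le_log (pow_pos hlam0 _) h9
    rw [Real.log_pow] at h10
    have : -s = Real.log δ := by rw [hsdef, neg_neg]
    rw [this]
    exact_mod_cast h10
  -- upper bound on z
  have hz_ub : z ≤ (-1/L + 3*ε/4) * s := by
    have hz_le_m : z ≤ (m:ℝ) := by rw [hzdef]; exact_mod_cast hzs_le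
    have h11 : 1 ≤ (ε/4) * s := by
      have := mul_le_mul_of_nonneg_left hs3 (le_of_lt (show (0:ℝ) < ε/4 by linarith))
      have h12 : (ε/4) * (4/ε) = 1 := by
        field_simp
      linarith
    have : (m:ℝ) ≤ c₁ * s + (ε/4)*s := by linarith
    calc z ≤ (m:ℝ) := hz_le_m
      _ ≤ c₁ * s + (ε/4)*s := this
      _ = (-1/L + 3*ε/4) * s := by rw [hc₁def]; ring
  -- bounds on u := z / s
  have hu_lb : 1/(-L) ≤ z / s := by
    have h13 : s ≤ z * (-L) := by rw [mul_neg]; linarith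
    rw [le_div_iff₀ hs0]
    have h14 : 1/(-L) * s = s/(-L) := by ring
    rw [h14, div_le_iff₀ hnegL]
    exact h13
  have hu_ub : z / s ≤ -1/L + 3*ε/4 := by
    rw [div_le_iff₀ hs0]
    exact hz_ub
  -- conclude
  have hts : Real.log δ = -s := by rw [hsdef, neg_neg]
  rw [Real.dist_eq, hts]
  have hzs : z / (-s) = -(z/s) := by rw [div_neg]
  rw [hzs]
  have h14 : (1:ℝ)/(-L) = -(1/L) := by ring
  rw [h14] at hu_lb
  have h15 : 0 ≤ z/s + 1/L := by linarith
  have h16 : z/s + 1/L ≤ 3*ε/4 := by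
    have : -1/L = -(1/L) := by ring
    rw [this] at hu_ub
    linarith
  have : |(-(z/s)) - 1/L| = |z/s + 1/L| := by
    rw [← abs_neg]; congr 1; ring
  rw [this, abs_of_nonneg h15]
  linarith
end

section
/- Let Q be a permutation-invariant probability distribution on {0,1}^{n+1}, Z = Σ_{i=1}^{n+1} Y_i, and L the number of failures among U_1,...,U_n, where each U_i is obtained from Y_i by flipping 1 to 0 with probability λ independently (U_i = 0 if Y_i = 0; U_i = 0 with prob. λ and 1 with prob. 1-λ if Y_i = 1). Then for l+1 ≤ z ≤ n+1, Q(L ≤ l | Z = z) = ((n-z+1) B_{z,l}(ν) + z B_{z-1,l}(ν))/(n+1), where ν = 1-λ. -/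
/-- The number of ones among the first `n` coordinates of `y : Fin (n+1) → Bool`. -/
def onesFirst (n : ℕ) (y : Fin (n + 1) → Bool) : ℕ :=
  (Finset.univ.filter (fun i : Fin (n + 1) => i.val < n ∧ y i = true)).card

open Finset

lemma sum_bool_to_powerset (m k : ℕ) (f : (Fin m → Bool) → ℝ) :
    ∑ y ∈ Finset.univ.filter
        (fun y : Fin m → Bool => (Finset.univ.filter (fun i => y i = true)).card = k), f y
      = ∑ s ∈ Finset.powersetCard k (Finset.univ : Finset (Fin m)),
          f (fun i => decide (i ∈ s)) := by
  refine Finset.sum_nbij' (fun y => Finset.univ.filter (fun i => y i = true))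
    (fun s => fun i => decide (i ∈ s)) ?_ ?_ ?_ ?_ ?_
  · intro y hy
    simp only [mem_filter, mem_univ, true_and] at hy
    simp [Finset.mem_powersetCard, hy]
  · intro s hs
    simp only [Finset.mem_powersetCard] at hs
    simp only [mem_filter, mem_univ, true_and]
    rw [← hs.2]
    congr 1
    ext i; simp
  · intro y hy
    funext i
    simp
  · intro s hs
    ext i; simp
  · intro y hy
    congr 1
    funext i
    simp

/-- Conditioned on `Z = z` the exchangeable distribution is uniform over weight-`z`
binary strings, and given a string whose first `n` coordinates contain `k` ones,
`P(L ≤ l) = B_{k,l}(ν)`.  Hence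
`Q(L ≤ l | Z = z) = (∑_{|y| = z} B_{onesFirst y, l}(ν)) / C(n+1,z)`, and this equals
`((n-z+1) B_{z,l}(ν) + z B_{z-1,l}(ν)) / (n+1)` for `l+1 ≤ z ≤ n+1`. -/
theorem stmt_13 (n l z : ℕ) (lam : ℝ) (hlam0 : 0 < lam) (hlam1 : lam < 1)
    (hz1 : l + 1 ≤ z) (hz2 : z ≤ n + 1) :
    (∑ y ∈ Finset.univ.filter
        (fun y : Fin (n + 1) → Bool =>
          (Finset.univ.filter (fun i => y i = true)).card = z),
        binCDF (onesFirst n y) l (1 - lam)) / ((n + 1).choose z : ℝ)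
      = (((n : ℝ) - z + 1) * binCDF z l (1 - lam)
          + (z : ℝ) * binCDF (z - 1) l (1 - lam)) / ((n : ℝ) + 1) := by
  have hz0 : 1 ≤ z := le_trans (Nat.le_add_left 1 l) hz1
  rw [sum_bool_to_powerset]
  -- onesFirst of the indicator of s
  have hones : ∀ s ∈ Finset.powersetCard z (Finset.univ : Finset (Fin (n+1))),
      onesFirst n (fun i => decide (i ∈ s)) = if Fin.last n ∈ s then z - 1 else z := by
    intro s hs
    rw [Finset.mem_powersetCard] at hs
    unfold onesFirst
    have hset : Finset.univ.filter
        (fun i : Fin (n+1) => i.val < n ∧ (decide (i ∈ s) : Bool) = true)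
        = s.erase (Fin.last n) := by
      ext i
      simp only [mem_filter, mem_univ, true_and, Finset.mem_erase, decide_eq_true_eq]
      constructor
      · rintro ⟨hi, his⟩
        exact ⟨fun h => by simp [h, Fin.last] at hi, his⟩
      · rintro ⟨hne, his⟩
        refine ⟨?_, his⟩
        have := i.isLt
        rcases Nat.lt_succ_iff_lt_or_eq.1 this with h | h
        · exact h
        · exact absurd (Fin.ext h) hne
    rw [hset]
    by_cases h : Fin.last n ∈ s
    · rw [Finset.card_erase_of_mem h, hs.2, if_pos h]
    · rw [Finset.erase_eq_of_notMem h, hs.2, if_neg h]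
  rw [Finset.sum_congr rfl (fun s hs => by rw [hones s hs, apply_ite (fun k => binCDF k l (1 - lam))])]
  rw [Finset.sum_ite]
  rw [Finset.sum_const, Finset.sum_const]
  -- cardinalities
  have hcard2 : (Finset.powersetCard z (Finset.univ : Finset (Fin (n+1)))).filter
      (fun s => ¬ Fin.last n ∈ s) = Finset.powersetCard z (Finset.univ.erase (Fin.last n)) := by
    ext s
    simp only [mem_filter, Finset.mem_powersetCard]
    constructor
    · rintro ⟨⟨-, hc⟩, hn⟩
      exact ⟨fun i hi => Finset.mem_erase.2 ⟨fun h => hn (h ▸ hi), Finset.mem_univ i⟩, hc⟩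
    · rintro ⟨hsub, hc⟩
      exact ⟨⟨Finset.subset_univ s, hc⟩, fun h => (Finset.mem_erase.1 (hsub h)).1 rfl⟩
  have hcu : (Finset.univ.erase (Fin.last n)).card = n := by
    rw [Finset.card_erase_of_mem (Finset.mem_univ _), Finset.card_univ, Fintype.card_fin]
    omega
  have hc2 : ((Finset.powersetCard z (Finset.univ : Finset (Fin (n+1)))).filter
      (fun s => ¬ Fin.last n ∈ s)).card = n.choose z := by
    rw [hcard2, Finset.card_powersetCard, hcu]
  have hc1 : ((Finset.powersetCard z (Finset.univ : Finset (Fin (n+1)))).filter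
      (fun s => Fin.last n ∈ s)).card = n.choose (z - 1) := by
    have htot : ((Finset.powersetCard z (Finset.univ : Finset (Fin (n+1)))).filter
        (fun s => Fin.last n ∈ s)).card + n.choose z = (n+1).choose z := by
      rw [← hc2, Finset.card_filter_add_card_filter_not,
        Finset.card_powersetCard, Finset.card_univ, Fintype.card_fin]
    have hpascal : (n+1).choose z = n.choose (z-1) + n.choose z := by
      obtain ⟨z', rfl⟩ := Nat.exists_eq_add_of_le hz0
      simp [Nat.choose_succ_succ, Nat.add_comm, Nat.add_sub_cancel_left]
    omega
  rw [hc1, hc2]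
  -- choose identities over ℝ
  have hch : 0 < (n+1).choose z := Nat.choose_pos hz2
  have hid1 : (n.choose z : ℝ) * ((n:ℝ) + 1) = (((n:ℝ) - z + 1)) * ((n+1).choose z : ℝ) := by
    have := Nat.choose_mul_succ_eq n z
    have hcast : ((n.choose z * (n + 1) : ℕ) : ℝ) = (((n+1).choose z * (n + 1 - z) : ℕ) : ℝ) := by
      exact_mod_cast congrArg Nat.cast this
    push_cast [Nat.cast_sub hz2] at hcast
    push_cast
    linarith [hcast]
  have hid2 : (n.choose (z-1) : ℝ) * ((n:ℝ) + 1) = (z : ℝ) * ((n+1).choose z : ℝ) := by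
    have hz' : z - 1 + 1 = z := Nat.succ_pred_eq_of_pos hz0
    have hthis : (n + 1) * n.choose (z - 1) = (n+1).choose z * z := by
      rw [← hz']; exact Nat.add_one_mul_choose_eq n (z-1)
    have hcast : (((n + 1) * n.choose (z-1) : ℕ) : ℝ)
        = (((n+1).choose z * z : ℕ) : ℝ) := by exact_mod_cast congrArg Nat.cast hthis
    push_cast at hcast
    linarith [hcast]
  have hchR : ((n+1).choose z : ℝ) ≠ 0 := by positivity
  have hn1 : (n : ℝ) + 1 ≠ 0 := by positivity
  field_simp
  linear_combination binCDF (z-1) l (1-lam) * hid2 + binCDF z l (1-lam) * hid1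
end

section
/- Under the same setting, for l+1 ≤ z ≤ n+1, Q(Y_{n+1} = 0 and L ≤ l | Z = z) = (n-z+1) B_{z,l}(ν)/(n+1), and for 0 ≤ z ≤ l, Q(Y_{n+1}=0 and L ≤ l | Z = z) = (n-z+1)/(n+1). -/
lemma binCDF_of_le (z l : ℕ) (h : z ≤ l) (p : ℝ) : binCDF z l p = 1 := by
  unfold binCDF
  rw [← Finset.sum_subset (Finset.range_subset_range.2 (by omega) : Finset.range (z+1) ⊆ _)]
  · have h1 := add_pow p (1 - p) z
    simp only [add_sub_cancel, one_pow] at h1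
    conv_rhs => rw [h1]
    exact Finset.sum_congr rfl (fun j hj => by ring)
  · intro j _ hj
    simp only [Finset.mem_range, not_lt] at hj
    rw [Nat.choose_eq_zero_of_lt (by omega)]; simp

lemma key (n l z : ℕ) (lam : ℝ) (hz2 : z ≤ n + 1) :
    (∑ y ∈ Finset.univ.filter
        (fun y : Fin (n + 1) → Bool =>
          (Finset.univ.filter (fun i => y i = true)).card = z
            ∧ y (Fin.last n) = false),
        binCDF (onesFirst n y) l (1 - lam))
      = (n.choose z : ℝ) * binCDF z l (1 - lam) := by
  have hcongr : ∀ y ∈ Finset.univ.filter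
        (fun y : Fin (n + 1) → Bool =>
          (Finset.univ.filter (fun i => y i = true)).card = z
            ∧ y (Fin.last n) = false),
      binCDF (onesFirst n y) l (1 - lam) = binCDF z l (1 - lam) := by
    intro y hy
    simp only [Finset.mem_filter, Finset.mem_univ, true_and] at hy
    obtain ⟨hc, hl⟩ := hy
    have : onesFirst n y = z := by
      rw [← hc]
      unfold onesFirst
      congr 1
      apply Finset.filter_congr
      intro i _
      constructor
      · rintro ⟨_, h⟩; exact h
      · intro h
        refine ⟨?_, h⟩
        by_contra hn
        have h2 := i.isLt
        have : i = Fin.last n := Fin.ext (by simp only [Fin.val_last]; omega)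
        rw [this, hl] at h; simp at h
    rw [this]
  rw [Finset.sum_congr rfl hcongr, Finset.sum_const, nsmul_eq_mul]
  congr 2
  -- card of the filter set = n.choose z
  have : (Finset.univ.filter
        (fun y : Fin (n + 1) → Bool =>
          (Finset.univ.filter (fun i => y i = true)).card = z
            ∧ y (Fin.last n) = false)).card
      = ((Finset.univ.erase (Fin.last n)).powersetCard z).card := by
    refine Finset.card_bij' (fun y _ => Finset.univ.filter (fun i => y i = true))
      (fun s _ => fun i => decide (i ∈ s)) ?_ ?_ ?_ ?_
    · intro y hy
      simp only [Finset.mem_filter, Finset.mem_univ, true_and] at hy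
      rw [Finset.mem_powersetCard]
      refine ⟨?_, hy.1⟩
      intro i hi
      simp only [Finset.mem_filter, Finset.mem_univ, true_and] at hi
      simp only [Finset.mem_erase, Finset.mem_univ, and_true]
      intro he; rw [he, hy.2] at hi; simp at hi
    · intro s hs
      rw [Finset.mem_powersetCard] at hs
      simp only [Finset.mem_filter, Finset.mem_univ, true_and]
      constructor
      · rw [← hs.2]; congr 1; ext i; simp
      · simp only [decide_eq_false_iff_not]
        intro hmem
        have := hs.1 hmem
        simp at this
    · intro y hy
      funext i
      simp only [Finset.mem_filter, Finset.mem_univ, true_and]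
      cases h : y i <;> simp [h]
    · intro s hs
      ext i; simp
  rw [this, Finset.card_powersetCard]
  congr 1
  simp [Finset.card_erase_of_mem]

/-- Conditioned on `Z = z` the distribution is uniform over weight-`z` strings;
the event `{Y_{n+1} = 0}` restricts to strings whose last coordinate is `false`,
and given such a string `P(L ≤ l) = B_{onesFirst y, l}(ν)`.  Hence
`Q(Y_{n+1}=0, L ≤ l | Z = z) = (n-z+1) B_{z,l}(ν)/(n+1)` for `l+1 ≤ z ≤ n+1`,
and `= (n-z+1)/(n+1)` for `z ≤ l`. -/
theorem stmt_14 (n l z : ℕ) (lam : ℝ) (hlam0 : 0 < lam) (hlam1 : lam < 1)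
    (hz2 : z ≤ n + 1) :
    (l + 1 ≤ z →
      (∑ y ∈ Finset.univ.filter
          (fun y : Fin (n + 1) → Bool =>
            (Finset.univ.filter (fun i => y i = true)).card = z
              ∧ y (Fin.last n) = false),
          binCDF (onesFirst n y) l (1 - lam)) / ((n + 1).choose z : ℝ)
        = ((n : ℝ) - z + 1) * binCDF z l (1 - lam) / ((n : ℝ) + 1)) ∧
    (z ≤ l →
      (∑ y ∈ Finset.univ.filter
          (fun y : Fin (n + 1) → Bool =>
            (Finset.univ.filter (fun i => y i = true)).card = z
              ∧ y (Fin.last n) = false),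
          binCDF (onesFirst n y) l (1 - lam)) / ((n + 1).choose z : ℝ)
        = ((n : ℝ) - z + 1) / ((n : ℝ) + 1)) := by
  have hmain : (∑ y ∈ Finset.univ.filter
          (fun y : Fin (n + 1) → Bool =>
            (Finset.univ.filter (fun i => y i = true)).card = z
              ∧ y (Fin.last n) = false),
          binCDF (onesFirst n y) l (1 - lam)) / ((n + 1).choose z : ℝ)
        = ((n : ℝ) - z + 1) * binCDF z l (1 - lam) / ((n : ℝ) + 1) := by
    rw [key n l z lam hz2]
    have hC : (0 : ℝ) < ((n + 1).choose z : ℝ) := by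
      exact_mod_cast Nat.choose_pos hz2
    have hid : (n.choose z : ℝ) * ((n : ℝ) + 1) = ((n + 1).choose z : ℝ) * ((n : ℝ) - z + 1) := by
      have := Nat.choose_mul_succ_eq n z
      have hcast : ((n.choose z * (n + 1) : ℕ) : ℝ) = (((n+1).choose z * (n + 1 - z) : ℕ) : ℝ) := by
        exact_mod_cast congrArg (Nat.cast : ℕ → ℝ) this
      push_cast [Nat.cast_sub hz2] at hcast
      push_cast
      linarith
    field_simp
    linear_combination binCDF z l (1 - lam) * hid
  constructor
  · intro _; exact hmain
  · intro hzl
    rw [hmain, binCDF_of_le z l hzl, mul_one]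
end
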